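/- arXiv:1108.1324 — 3 statements merged into one kernel-verified Lean document; each statement's English description precedes it below -/
import Mathlib

section
/- There is a universal constant A < ∞ with the following property: for every C ≥ 1, every C-doubling metric space Z, every K ≥ 1, and every linear subspace V of the real vector space of functions Z → ℝ all of whose elements are K-quasilinear Lipschitz functions, one has dim V ≤ (A·K)^{log₂ C}. -/
open Metric MeasureTheory Filter Set
open scoped NNReal ENNReal

/-- The variation of `f` on the ball `B(x,r)`: `sup { |f y - f x| / r : y ∈ B(x,r) }`. -/
noncomputable def varBall {X : Type*} [MetricSpace X] (f : X → ℝ) (x : X) (r : ℝ) : ℝ :=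
  sSup ((fun y => |f y - f x| / r) '' Metric.ball x r)

/-- Lower pointwise Lipschitz constant `lip_x f`. -/
noncomputable def lipLow {X : Type*} [MetricSpace X] (f : X → ℝ) (x : X) : ℝ :=
  Filter.liminf (fun r => varBall f x r) (nhdsWithin 0 (Set.Ioi (0:ℝ)))

/-- Upper pointwise Lipschitz constant `Lip_x f`. -/
noncomputable def lipUp {X : Type*} [MetricSpace X] (f : X → ℝ) (x : X) : ℝ :=
  Filter.limsup (fun r => varBall f x r) (nhdsWithin 0 (Set.Ioi (0:ℝ)))

/-- `f` is a real-valued Lipschitz function. -/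
def IsLip {X : Type*} [MetricSpace X] (f : X → ℝ) : Prop := ∃ K : ℝ≥0, LipschitzWith K f

/-- `μ` is doubling with constant `C`. -/
def DoublingWith {X : Type*} [MetricSpace X] [MeasurableSpace X] (μ : Measure X) (C : ℝ≥0) :
    Prop :=
  ∀ (x : X) (r : ℝ), 0 < r → μ (Metric.ball x (2 * r)) ≤ (C : ℝ≥0∞) * μ (Metric.ball x r)

/-- `(X, μ)` admits a `p`-Poincaré inequality with constant `L`. -/
def PoincareIneq {X : Type*} [MetricSpace X] [MeasurableSpace X] (μ : Measure X) (p L : ℝ) :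
    Prop :=
  (∀ (x : X) (r : ℝ), 0 < r → 0 < μ (Metric.ball x r) ∧ μ (Metric.ball x r) < ⊤) ∧
  ∀ f : X → ℝ, IsLip f → ∀ (x : X) (r : ℝ), 0 < r →
    ⨍ y in Metric.ball x r, |f y - ⨍ z in Metric.ball x r, f z ∂μ| ∂μ ≤
      L * r * (⨍ z in Metric.ball x (L * r), (lipLow f z) ^ p ∂μ) ^ (1 / p)

/-- An `N`-tuple of functions is dependent to first order at `x`. -/
def DependentAt {X : Type*} [MetricSpace X] {N : ℕ} (f : Fin N → X → ℝ) (x : X) : Prop :=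
  ∃ l : Fin N → ℝ, l ≠ 0 ∧ lipUp (fun y => ∑ i, l i * f i y) x = 0

/-- A measurable differentiable structure of dimension at most `N₀`. -/
def HasMDS {X : Type*} [MetricSpace X] [MeasurableSpace X] (μ : Measure X) (N₀ : ℕ) : Prop :=
  ∃ (ι : Type) (_ : Countable ι) (U : ι → Set X) (N : ι → ℕ)
      (φ : (i : ι) → Fin (N i) → X → ℝ),
    (∀ i, MeasurableSet (U i) ∧ 0 < μ (U i)) ∧
    μ (Set.univ \ ⋃ i, U i) = 0 ∧
    (∀ i, N i ≤ N₀) ∧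
    (∀ i k, IsLip (φ i k)) ∧
    (∀ f : X → ℝ, IsLip f → ∀ i, ∃ df : X → (Fin (N i) → ℝ),
      Measurable df ∧
      (∀ᵐ x ∂(μ.restrict (U i)),
        lipUp (fun y => f y - ∑ k, df x k * φ i k y) x = 0) ∧
      ∀ dg : X → (Fin (N i) → ℝ), Measurable dg →
        (∀ᵐ x ∂(μ.restrict (U i)),
          lipUp (fun y => f y - ∑ k, dg x k * φ i k y) x = 0) →
        (∀ᵐ x ∂(μ.restrict (U i)), df x = dg x))

/-- The global Lipschitz constant `LIP(u)`. -/
noncomputable def LIPconst {Z : Type*} [MetricSpace Z] (u : Z → ℝ) : ℝ :=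
  sSup {v : ℝ | ∃ p q : Z, p ≠ q ∧ v = |u p - u q| / dist p q}

/-- A Lipschitz function `u` is `K`-quasilinear if its variation on every ball is at least
`LIP(u)/K`. -/
def Quasilinear {Z : Type*} [MetricSpace Z] (K : ℝ) (u : Z → ℝ) : Prop :=
  IsLip u ∧ ∀ (x : Z) (r : ℝ), 0 < r → LIPconst u / K ≤ varBall u x r

/-- A metric space is `C`-doubling: every ball is covered by at most `C` balls of half
the radius. -/
def DoublingSpace (Z : Type*) [MetricSpace Z] (C : ℝ) : Prop :=
  ∀ (x : Z) (r : ℝ), 0 < r → ∃ T : Finset Z,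
    (T.card : ℝ) ≤ C ∧ Metric.ball x r ⊆ ⋃ t ∈ T, Metric.ball t (r / 2)

private lemma bddAbove_lipSet {Z : Type*} [MetricSpace Z] {u : Z → ℝ} (h : IsLip u) :
    BddAbove {v : ℝ | ∃ p q : Z, p ≠ q ∧ v = |u p - u q| / dist p q} := by
  obtain ⟨K', hK'⟩ := h
  refine ⟨(K' : ℝ), ?_⟩
  rintro v ⟨a, b, hab, rfl⟩
  have h1 := hK'.dist_le_mul a b
  rw [Real.dist_eq] at h1
  exact (div_le_iff₀ (dist_pos.2 hab)).2 h1

private lemma abs_sub_le_LIP {Z : Type*} [MetricSpace Z] {u : Z → ℝ} (h : IsLip u)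
    (p q : Z) : |u p - u q| ≤ LIPconst u * dist p q := by
  rcases eq_or_ne p q with rfl | hpq
  · simp
  have hd : 0 < dist p q := dist_pos.2 hpq
  have hmem : |u p - u q| / dist p q ∈
      {v : ℝ | ∃ p q : Z, p ≠ q ∧ v = |u p - u q| / dist p q} := ⟨p, q, hpq, rfl⟩
  have := le_csSup (bddAbove_lipSet h) hmem
  exact (div_le_iff₀ hd).1 this

private lemma LIP_pos {Z : Type*} [MetricSpace Z] {u : Z → ℝ} (h : IsLip u)
    {a b : Z} (hab : u a ≠ u b) : 0 < LIPconst u := by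
  have hne : a ≠ b := fun he => hab (by rw [he])
  have hd : 0 < dist a b := dist_pos.2 hne
  have hv : 0 < |u a - u b| / dist a b :=
    div_pos (abs_pos.2 (sub_ne_zero.2 hab)) hd
  have hmem : |u a - u b| / dist a b ∈
      {v : ℝ | ∃ p q : Z, p ≠ q ∧ v = |u p - u q| / dist p q} := ⟨a, b, hne, rfl⟩
  exact lt_of_lt_of_le hv (le_csSup (bddAbove_lipSet h) hmem)

private lemma doubling_cover {Z : Type} [MetricSpace Z] {C : ℝ}
    (hD : DoublingSpace Z C) (hC0 : 0 ≤ C) (x : Z) {r : ℝ} (hr : 0 < r) (m : ℕ) :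
    ∃ T : Finset Z, (T.card : ℝ) ≤ C ^ m ∧
      Metric.ball x r ⊆ ⋃ t ∈ T, Metric.ball t (r / 2 ^ m) := by
  classical
  induction m with
  | zero =>
    refine ⟨{x}, by simp, ?_⟩
    simp only [pow_zero, div_one, Finset.mem_singleton]
    intro y hy
    exact Set.mem_iUnion₂.2 ⟨x, rfl, hy⟩
  | succ m ih =>
    obtain ⟨T, hcard, hcov⟩ := ih
    have hrm : 0 < r / 2 ^ m := by positivity
    choose g hg1 hg2 using fun t : Z => hD t (r / 2 ^ m) hrm
    refine ⟨T.biUnion g, ?_, ?_⟩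
    · calc ((T.biUnion g).card : ℝ) ≤ ∑ t ∈ T, ((g t).card : ℝ) := by
            exact_mod_cast Finset.card_biUnion_le
        _ ≤ ∑ _t ∈ T, C := Finset.sum_le_sum fun t _ => hg1 t
        _ = T.card * C := by rw [Finset.sum_const, nsmul_eq_mul]
        _ ≤ C ^ m * C := mul_le_mul_of_nonneg_right hcard hC0
        _ = C ^ (m + 1) := by ring
    · intro y hy
      obtain ⟨t, ht, hyt⟩ := Set.mem_iUnion₂.1 (hcov hy)
      obtain ⟨s, hs, hys⟩ := Set.mem_iUnion₂.1 (hg2 t hyt)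
      refine Set.mem_iUnion₂.2 ⟨s, Finset.mem_biUnion.2 ⟨t, ht, hs⟩, ?_⟩
      have he : r / 2 ^ m / 2 = r / 2 ^ (m + 1) := by ring
      rwa [he] at hys

/-- Lemma 5.4(2): there is a universal constant `A` such that any linear
space of `K`-quasilinear functions on a `C`-doubling metric space has dimension at most
`(A·K)^{log₂ C}`. -/
theorem quasilinear_dim_le_of_doubling :
    ∃ A : ℝ, 0 < A ∧ ∀ (C : ℝ), 1 ≤ C → ∀ (Z : Type) [MetricSpace Z],
      DoublingSpace Z C → ∀ (K : ℝ), 1 ≤ K →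
      ∀ V : Submodule ℝ (Z → ℝ), (∀ u ∈ V, Quasilinear K u) →
        FiniteDimensional ℝ V ∧
        (Module.finrank ℝ V : ℝ) ≤ (A * K) ^ Real.logb 2 C := by
  refine ⟨16, by norm_num, ?_⟩
  intro C hC1 Z _ hD K hK V hV
  have hK0 : (0:ℝ) < K := by linarith
  have hC0 : (0:ℝ) < C := by linarith
  have hAK : (0:ℝ) < 16 * K := by linarith
  by_cases hZ : Nonempty Z
  case neg =>
    haveI : Subsingleton (Z → ℝ) := ⟨fun f g => funext fun z => (hZ ⟨z⟩).elim⟩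
    haveI : Subsingleton V := ⟨fun a b => Subtype.ext (Subsingleton.elim _ _)⟩
    haveI : FiniteDimensional ℝ V := Module.Finite.of_basis (Module.Basis.empty (ι := Fin 0) V)
    refine ⟨inferInstance, ?_⟩
    rw [Module.finrank_zero_of_subsingleton]
    exact_mod_cast Real.rpow_nonneg hAK.le _
  case pos =>
    obtain ⟨x⟩ := hZ
    set m : ℕ := ⌈Real.logb 2 K⌉₊ + 3 with hm
    have hlogK : 0 ≤ Real.logb 2 K := Real.logb_nonneg one_lt_two hK
    have hlogC : 0 ≤ Real.logb 2 C := Real.logb_nonneg one_lt_two hC1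
    have h2K : (2:ℝ) ^ Real.logb 2 K = K := Real.rpow_logb two_pos (by norm_num) hK0
    have h2m_low : 8 * K ≤ (2:ℝ) ^ m := by
      have h1 : Real.logb 2 K ≤ (⌈Real.logb 2 K⌉₊ : ℝ) := Nat.le_ceil _
      have h2 : (2:ℝ) ^ (Real.logb 2 K + 3) ≤ (2:ℝ) ^ ((m : ℕ) : ℝ) := by
        apply (Real.rpow_le_rpow_left_iff one_lt_two).2
        push_cast [hm]
        linarith
      rw [Real.rpow_natCast] at h2
      calc 8 * K = (2:ℝ) ^ (Real.logb 2 K + 3) := by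
            rw [Real.rpow_add two_pos, h2K]
            norm_num
            ring
        _ ≤ _ := h2
    have h2m_up : (2:ℝ) ^ m ≤ 16 * K := by
      have h1 : (⌈Real.logb 2 K⌉₊ : ℝ) < Real.logb 2 K + 1 := Nat.ceil_lt_add_one hlogK
      have h2 : (2:ℝ) ^ ((m : ℕ) : ℝ) ≤ (2:ℝ) ^ (Real.logb 2 K + 4) := by
        apply (Real.rpow_le_rpow_left_iff one_lt_two).2
        push_cast [hm]
        linarith
      rw [Real.rpow_natCast] at h2
      calc (2:ℝ) ^ m ≤ (2:ℝ) ^ (Real.logb 2 K + 4) := h2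
        _ = 16 * K := by
            rw [Real.rpow_add two_pos, h2K]
            norm_num
            ring
    obtain ⟨T, hTcard, hTcov⟩ := doubling_cover hD hC0.le x one_pos m
    -- the evaluation map on the net is injective
    let φ : V →ₗ[ℝ] (↥T → ℝ) :=
      LinearMap.pi fun t : T => (LinearMap.proj (t : Z)).comp V.subtype
    have hinj : Function.Injective φ := by
      rw [← LinearMap.ker_eq_bot, LinearMap.ker_eq_bot']
      rintro ⟨u, hu⟩ h0
      have hz : ∀ t ∈ T, u t = 0 := fun t ht => congrFun h0 ⟨t, ht⟩
      have hql := hV u hu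
      have hlip := hql.1
      have key : ∀ z : Z, u z = 0 := by
        by_cases hconst : ∀ a b : Z, u a = u b
        · obtain ⟨t, ht, _⟩ := Set.mem_iUnion₂.1 (hTcov (mem_ball_self one_pos))
          intro z
          rw [hconst z t, hz t ht]
        · push_neg at hconst
          obtain ⟨a, b, hab⟩ := hconst
          exfalso
          have hL : 0 < LIPconst u := LIP_pos hlip hab
          have hvar := hql.2 x 1 one_pos
          have hne : ((fun y => |u y - u x| / 1) '' Metric.ball x 1).Nonempty :=
            ⟨_, Set.mem_image_of_mem _ (mem_ball_self one_pos)⟩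
          have hlt : LIPconst u / K / 2 < varBall u x 1 :=
            lt_of_lt_of_le (half_lt_self (div_pos hL hK0)) hvar
          have hlt' : LIPconst u / K / 2 <
              sSup ((fun y => |u y - u x| / 1) '' Metric.ball x 1) := hlt
          obtain ⟨v, hvmem, hv⟩ := exists_lt_of_lt_csSup hne hlt'
          obtain ⟨y, hy, rfl⟩ := hvmem
          have hbnd : ∀ w, w ∈ Metric.ball x 1 → |u w| ≤ LIPconst u / 2 ^ m := by
            intro w hw
            obtain ⟨t, ht, hwt⟩ := Set.mem_iUnion₂.1 (hTcov hw)
            have h2 : dist w t < 1 / 2 ^ m := mem_ball.1 hwt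
            calc |u w| = |u w - u t| := by rw [hz t ht, sub_zero]
              _ ≤ LIPconst u * dist w t := abs_sub_le_LIP hlip w t
              _ ≤ LIPconst u * (1 / 2 ^ m) :=
                  mul_le_mul_of_nonneg_left h2.le hL.le
              _ = LIPconst u / 2 ^ m := by ring
          have hy1 := hbnd y hy
          have hx1 := hbnd x (mem_ball_self one_pos)
          have habs : |u y - u x| ≤ 2 * (LIPconst u / 2 ^ m) := by
            have h3 : |u y - u x| ≤ |u y| + |u x| := by
              have := abs_add_le (u y) (-u x)
              simpa [sub_eq_add_neg] using this
            linarith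
          have hsmall : 2 * (LIPconst u / 2 ^ m) ≤ LIPconst u / K / 2 := by
            have hden : (0:ℝ) < 8 * K := by linarith
            have h4 : 2 * LIPconst u / 2 ^ m ≤ 2 * LIPconst u / (8 * K) :=
              div_le_div_of_nonneg_left (by linarith) hden h2m_low
            have h5 : 2 * LIPconst u / (8 * K) = LIPconst u / K / 4 := by
              field_simp
              ring
            have h6 : LIPconst u / K / 4 ≤ LIPconst u / K / 2 := by
              have : 0 < LIPconst u / K := div_pos hL hK0
              linarith
            calc 2 * (LIPconst u / 2 ^ m) = 2 * LIPconst u / 2 ^ m := by ring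
              _ ≤ LIPconst u / K / 4 := by rw [← h5]; exact h4
              _ ≤ LIPconst u / K / 2 := h6
          simp only [div_one] at hv
          linarith
      exact Subtype.ext (funext key)
    haveI hfd : FiniteDimensional ℝ V := Module.Finite.of_injective φ hinj
    refine ⟨hfd, ?_⟩
    have h1 : Module.finrank ℝ V ≤ Module.finrank ℝ (↥T → ℝ) :=
      LinearMap.finrank_le_finrank_of_injective hinj
    have h2 : Module.finrank ℝ (↥T → ℝ) = T.card := by
      rw [Module.finrank_pi]
      exact Fintype.card_coe T
    have hfin : (Module.finrank ℝ V : ℝ) ≤ (T.card : ℝ) := by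
      exact_mod_cast h1.trans_eq h2
    have e1 : ((2:ℝ) ^ m) ^ Real.logb 2 C = C ^ m := by
      rw [← Real.rpow_natCast (2:ℝ) m, ← Real.rpow_mul (by norm_num : (0:ℝ) ≤ 2),
        mul_comm, Real.rpow_mul (by norm_num : (0:ℝ) ≤ 2),
        Real.rpow_logb two_pos (by norm_num) hC0, Real.rpow_natCast]
    have e2 : C ^ m ≤ (16 * K) ^ Real.logb 2 C := by
      rw [← e1]
      exact Real.rpow_le_rpow (by positivity) h2m_up hlogC
    exact hfin.trans (hTcard.trans e2)
end

section
/- Let (X,d,μ) be a metric measure space with μ Borel regular and doubling, admitting a p-Poincaré inequality with constant L ≥ 1 for some p ≥ 1. Then there is a constant C₁ < ∞, depending only on the doubling constant and L, with the following property: for every A < ∞, every ε > 0, every Lipschitz function u : X → ℝ, and every point x ∈ X which is an approximate continuity point of the function z ↦ lip_z u, there exists r₀ = r₀(u,x,A,ε) > 0 such that whenever 0 < r ≤ r₀ and y, y' ∈ B(x, A·r) satisfy d(y,y') ≤ r, then |⨍_{B(y,r)} u dμ − ⨍_{B(y',r)} u dμ| ≤ C₁·r·(lip_x u + ε). -/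
open Metric MeasureTheory Filter Set
open scoped NNReal ENNReal

/-- `g` is approximately continuous at `x`: there is a measurable set `A` having `x` as a
point of density such that `g` restricted to `A` is continuous at `x`. -/
def ApproxContinuousAt {X : Type*} [MetricSpace X] [MeasurableSpace X]
    (μ : Measure X) (g : X → ℝ) (x : X) : Prop :=
  ∃ A : Set X, MeasurableSet A ∧
    Filter.Tendsto (fun r : ℝ => μ (Metric.ball x r \ A) / μ (Metric.ball x r))
      (nhdsWithin 0 (Set.Ioi (0:ℝ))) (nhds 0) ∧
    ContinuousWithinAt g A x

lemma varBall_nonneg {X : Type*} [MetricSpace X] (f : X → ℝ) (x : X) {r : ℝ} (hr : 0 < r)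
    {K : ℝ≥0} (hf : LipschitzWith K f) : 0 ≤ varBall f x r := by
  have hmem : (0:ℝ) ∈ (fun y => |f y - f x| / r) '' Metric.ball x r :=
    ⟨x, mem_ball_self hr, by simp⟩
  have hbdd : BddAbove ((fun y => |f y - f x| / r) '' Metric.ball x r) := by
    refine ⟨K, ?_⟩
    rintro _ ⟨y, hy, rfl⟩
    rw [div_le_iff₀ hr]
    calc |f y - f x| = dist (f y) (f x) := rfl
      _ ≤ K * dist y x := hf.dist_le_mul y x
      _ ≤ K * r := by
          have := (mem_ball.mp hy).le
          nlinarith [NNReal.coe_nonneg K, dist_nonneg (x := y) (y := x)]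
  exact le_csSup hbdd hmem

lemma varBall_le {X : Type*} [MetricSpace X] (f : X → ℝ) (x : X) {r : ℝ} (hr : 0 < r)
    {K : ℝ≥0} (hf : LipschitzWith K f) : varBall f x r ≤ K := by
  refine Real.sSup_le ?_ K.coe_nonneg
  rintro _ ⟨y, hy, rfl⟩
  rw [div_le_iff₀ hr]
  calc |f y - f x| = dist (f y) (f x) := rfl
    _ ≤ K * dist y x := hf.dist_le_mul y x
    _ ≤ K * r := by
        have := (mem_ball.mp hy).le
        nlinarith [NNReal.coe_nonneg K, dist_nonneg (x := y) (y := x)]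

lemma lipLow_nonneg' {X : Type*} [MetricSpace X] (f : X → ℝ) (x : X)
    {K : ℝ≥0} (hf : LipschitzWith K f) : 0 ≤ lipLow f x := by
  have hb : ∀ᶠ r in nhdsWithin (0:ℝ) (Set.Ioi 0), varBall f x r ≤ K :=
    eventually_nhdsWithin_of_forall (fun r hr => varBall_le f x hr hf)
  have hcob : IsCoboundedUnder (· ≥ ·) (nhdsWithin (0:ℝ) (Set.Ioi 0))
      (fun r => varBall f x r) := (isBoundedUnder_of_eventually_le hb).isCoboundedUnder_ge
  exact Filter.le_liminf_of_le hcob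
    (eventually_nhdsWithin_of_forall (fun r hr => varBall_nonneg f x hr hf))

lemma lipLow_le' {X : Type*} [MetricSpace X] (f : X → ℝ) (x : X)
    {K : ℝ≥0} (hf : LipschitzWith K f) : lipLow f x ≤ K := by
  have hb : IsBoundedUnder (· ≥ ·) (nhdsWithin (0:ℝ) (Set.Ioi 0)) (fun r => varBall f x r) :=
    isBoundedUnder_of_eventually_ge
      (eventually_nhdsWithin_of_forall (fun r hr => varBall_nonneg f x hr hf))
  refine Filter.liminf_le_of_le hb ?_
  intro b hb'
  obtain ⟨r, h1, h2⟩ := (hb'.and (eventually_nhdsWithin_of_forall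
    (fun r hr => varBall_le f x hr hf))).exists
  linarith

lemma lip_integrableOn {X : Type*} [MetricSpace X] [MeasurableSpace X] [BorelSpace X]
    (μ : Measure X) {u : X → ℝ} {K : ℝ≥0} (hu : LipschitzWith K u)
    (y : X) (R : ℝ) (hfin : μ (ball y R) < ⊤) : IntegrableOn u (ball y R) μ := by
  refine ⟨(hu.continuous.stronglyMeasurable.aestronglyMeasurable), ?_⟩
  refine HasFiniteIntegral.restrict_of_bounded (C := |u y| + K * |R|) hfin ?_
  refine (ae_restrict_iff' measurableSet_ball).mpr (ae_of_all _ fun z hz => ?_)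
  have h1 : |u z - u y| ≤ K * dist z y := by
    have := hu.dist_le_mul z y; rwa [Real.dist_eq] at this
  have h2 : dist z y ≤ |R| := (mem_ball.mp hz).le.trans (le_abs_self R)
  have h3 : ‖u z‖ = |u z| := rfl
  rw [h3]
  nlinarith [abs_sub_abs_le_abs_sub (u z) (u y), NNReal.coe_nonneg K, dist_nonneg (x:=z) (y:=y)]

lemma avg_diff_le {X : Type*} [MetricSpace X] [MeasurableSpace X] [BorelSpace X]
    (μ : Measure X) {u : X → ℝ} {s B : Set X} (hsub : s ⊆ B)
    (hs0 : 0 < μ s) (hsfin : μ s < ⊤) (hB0 : 0 < μ B) (hBfin : μ B < ⊤)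
    (hint : IntegrableOn u B μ) :
    |(⨍ z in s, u z ∂μ) - ⨍ z in B, u z ∂μ| ≤
      (μ B).toReal / (μ s).toReal * ⨍ z in B, |u z - ⨍ w in B, u w ∂μ| ∂μ := by
  set c := ⨍ w in B, u w ∂μ with hc
  have hs0' : (μ s).toReal ≠ 0 := (ENNReal.toReal_pos hs0.ne' hsfin.ne).ne'
  have hB0' : (μ B).toReal ≠ 0 := (ENNReal.toReal_pos hB0.ne' hBfin.ne).ne'
  have hints : IntegrableOn u s μ := hint.mono_set hsub
  have havg : (⨍ z in s, u z ∂μ) - c = ⨍ z in s, (u z - c) ∂μ := by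
    rw [setAverage_eq, setAverage_eq,
      integral_sub hints (integrableOn_const hsfin.ne), setIntegral_const,
      smul_eq_mul, smul_eq_mul, smul_eq_mul, mul_sub, measureReal_def]
    field_simp
  have h1 : |(⨍ z in s, u z ∂μ) - c| ≤ (μ s).toReal⁻¹ * ∫ z in s, |u z - c| ∂μ := by
    rw [havg, setAverage_eq, smul_eq_mul, abs_mul,
      abs_of_nonneg (inv_nonneg.mpr measureReal_nonneg)]
    have hn : |∫ x in s, (u x - c) ∂μ| ≤ ∫ z in s, |u z - c| ∂μ := by
      simpa [Real.norm_eq_abs] using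
        norm_integral_le_integral_norm (μ := μ.restrict s) (fun z => u z - c)
    exact mul_le_mul_of_nonneg_left hn (inv_nonneg.mpr ENNReal.toReal_nonneg)
  have hintB : IntegrableOn (fun z => |u z - c|) B μ :=
    ((hint.sub (integrableOn_const hBfin.ne)).abs)
  have h2 : ∫ z in s, |u z - c| ∂μ ≤ ∫ z in B, |u z - c| ∂μ :=
    setIntegral_mono_set hintB (ae_of_all _ fun z => abs_nonneg _) (ae_of_all _ hsub)
  calc |(⨍ z in s, u z ∂μ) - c| ≤ (μ s).toReal⁻¹ * ∫ z in s, |u z - c| ∂μ := h1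
    _ ≤ (μ s).toReal⁻¹ * ∫ z in B, |u z - c| ∂μ :=
        mul_le_mul_of_nonneg_left h2 (inv_nonneg.mpr ENNReal.toReal_nonneg)
    _ = (μ B).toReal / (μ s).toReal * ((μ B).toReal⁻¹ * ∫ z in B, |u z - c| ∂μ) := by
        field_simp
    _ = (μ B).toReal / (μ s).toReal * ⨍ z in B, |u z - c| ∂μ := by
        rw [setAverage_eq]; rfl

lemma doubling_iter {X : Type*} [MetricSpace X] [MeasurableSpace X]
    {μ : Measure X} {C : ℝ≥0}
    (hd : ∀ (x : X) (r : ℝ), 0 < r → μ (ball x (2 * r)) ≤ (C : ℝ≥0∞) * μ (ball x r))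
    (y : X) {s : ℝ} (hs : 0 < s) (m : ℕ) :
    μ (ball y (2 ^ m * s)) ≤ (C : ℝ≥0∞) ^ m * μ (ball y s) := by
  induction m with
  | zero => simp
  | succ n ih =>
      have h1 : (2:ℝ) ^ (n+1) * s = 2 * (2 ^ n * s) := by ring
      rw [h1]
      calc μ (ball y (2 * (2 ^ n * s))) ≤ (C : ℝ≥0∞) * μ (ball y (2 ^ n * s)) :=
            hd y _ (by positivity)
        _ ≤ (C : ℝ≥0∞) * ((C : ℝ≥0∞) ^ n * μ (ball y s)) := mul_le_mul_right ih _
        _ = (C : ℝ≥0∞) ^ (n+1) * μ (ball y s) := by ring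

lemma avg_pow_bound {X : Type*} [MetricSpace X] [MeasurableSpace X] [BorelSpace X]
    (μ : Measure X) {u : X → ℝ} {K : ℝ≥0} (hu : LipschitzWith K u)
    {p : ℝ} (hp : 1 ≤ p) {Aset : Set X} (hAmeas : MeasurableSet Aset)
    {x : X} {ε : ℝ} (hε : 0 < ε) {y : X} {R : ℝ}
    (hfin : μ (ball y R) < ⊤) (h0 : 0 < μ (ball y R))
    (hcont : ∀ z ∈ Aset ∩ ball y R, lipLow u z ≤ lipLow u x + ε)
    (hν : ((K:ℝ) ^ p) * (μ (ball y R \ Aset)).toReal ≤ ε ^ p * (μ (ball y R)).toReal) :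
    ⨍ z in ball y R, (lipLow u z) ^ p ∂μ ≤ 2 * (lipLow u x + ε) ^ p := by
  set B := ball y R with hB
  set lx := lipLow u x with hlx
  have hlx0 : 0 ≤ lx := lipLow_nonneg' u x hu
  have hp0 : (0:ℝ) < p := lt_of_lt_of_le one_pos hp
  have hMB : 0 < (μ B).toReal := ENNReal.toReal_pos h0.ne' hfin.ne
  have hfinB : IsFiniteMeasure (μ.restrict B) := ⟨by rwa [Measure.restrict_apply_univ]⟩
  have hεp : ε ^ p ≤ (lx + ε) ^ p :=
    Real.rpow_le_rpow hε.le (by linarith) hp0.le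
  have hRHSpos : 0 ≤ (lx + ε) ^ p := Real.rpow_nonneg (by linarith) p
  by_cases hInt : IntegrableOn (fun z => (lipLow u z) ^ p) B μ
  · -- integrable case
    set h : X → ℝ := fun z => (lx + ε) ^ p + ((K:ℝ) ^ p) * (Asetᶜ).indicator (fun _ => (1:ℝ)) z
      with hh
    have hIntInd : IntegrableOn ((Asetᶜ).indicator (fun _ => (1:ℝ))) B μ :=
      (integrable_const (1:ℝ)).indicator hAmeas.compl
    have hIntH : IntegrableOn h B μ :=
      (integrableOn_const hfin.ne).add (hIntInd.const_mul _)
    have hpt : ∀ z ∈ B, (lipLow u z) ^ p ≤ h z := by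
      intro z hz
      by_cases hzA : z ∈ Aset
      · have h1 : lipLow u z ≤ lx + ε := hcont z ⟨hzA, hz⟩
        have h2 : (lipLow u z) ^ p ≤ (lx + ε) ^ p :=
          Real.rpow_le_rpow (lipLow_nonneg' u z hu) h1 hp0.le
        have h3 : (Asetᶜ).indicator (fun _ => (1:ℝ)) z = 0 := by
          simp [Set.indicator_of_notMem, hzA]
        rw [hh]; simp only [h3]
        nlinarith [Real.rpow_nonneg (NNReal.coe_nonneg K) p]
      · have h1 : lipLow u z ≤ K := lipLow_le' u z hu
        have h2 : (lipLow u z) ^ p ≤ (K:ℝ) ^ p :=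
          Real.rpow_le_rpow (lipLow_nonneg' u z hu) h1 hp0.le
        have h3 : (Asetᶜ).indicator (fun _ => (1:ℝ)) z = 1 := by
          simp [Set.indicator_of_mem, hzA]
        rw [hh]; simp only [h3]
        nlinarith
    have hIneq : ∫ z in B, (lipLow u z) ^ p ∂μ ≤ ∫ z in B, h z ∂μ :=
      setIntegral_mono_on hInt hIntH measurableSet_ball hpt
    have hIndInt : ∫ z in B, (Asetᶜ).indicator (fun _ => (1:ℝ)) z ∂μ
        = (μ (B \ Aset)).toReal := by
      rw [setIntegral_indicator hAmeas.compl, setIntegral_const, smul_eq_mul, mul_one,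
        ← Set.diff_eq, measureReal_def]
    have hIntHval : ∫ z in B, h z ∂μ
        = (lx + ε) ^ p * (μ B).toReal + (K:ℝ) ^ p * (μ (B \ Aset)).toReal := by
      rw [hh]
      rw [integral_add (integrableOn_const (C := (lx + ε) ^ p) hfin.ne) (hIntInd.const_mul _)]
      rw [setIntegral_const, smul_eq_mul, integral_const_mul, hIndInt, measureReal_def]
      ring
    have hbound : ∫ z in B, (lipLow u z) ^ p ∂μ
        ≤ (lx + ε) ^ p * (μ B).toReal + ε ^ p * (μ B).toReal := by
      rw [hIntHval] at hIneq
      linarith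
    rw [setAverage_eq, smul_eq_mul, measureReal_def]
    rw [inv_mul_le_iff₀ hMB]
    calc ∫ z in B, (lipLow u z) ^ p ∂μ
        ≤ (lx + ε) ^ p * (μ B).toReal + ε ^ p * (μ B).toReal := hbound
      _ ≤ (lx + ε) ^ p * (μ B).toReal + (lx + ε) ^ p * (μ B).toReal := by nlinarith
      _ = 2 * (lx + ε) ^ p * (μ B).toReal := by ring
      _ = (μ B).toReal * (2 * (lx + ε) ^ p) := by ring
  · rw [setAverage_eq, smul_eq_mul, integral_undef hInt, mul_zero]
    positivity

set_option maxHeartbeats 1000000 in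
/-- Lemma 7.3: comparison of averages of a Lipschitz function over nearby
balls near an approximate continuity point of `lip u`, in a doubling `p`-Poincaré space. -/
theorem avg_comparison_near_approx_continuity_point
    (Cμ : ℝ≥0) (L p : ℝ) (hL : 1 ≤ L) (hp : 1 ≤ p) :
    ∃ C₁ : ℝ, 0 < C₁ ∧ ∀ (X : Type) [MetricSpace X] [MeasurableSpace X] [BorelSpace X]
      (μ : Measure X),
      DoublingWith μ Cμ → PoincareIneq μ p L →
      ∀ (A : ℝ) (ε : ℝ), 0 < A → 0 < ε →
      ∀ (u : X → ℝ), IsLip u →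
      ∀ x : X, ApproxContinuousAt μ (fun z => lipLow u z) x →
      ∃ r₀ : ℝ, 0 < r₀ ∧ ∀ r : ℝ, 0 < r → r ≤ r₀ →
        ∀ y y' : X, y ∈ Metric.ball x (A * r) → y' ∈ Metric.ball x (A * r) →
          dist y y' ≤ r →
          |(⨍ z in Metric.ball y r, u z ∂μ) - ⨍ z in Metric.ball y' r, u z ∂μ| ≤
            C₁ * r * (lipLow u x + ε) := by
  have hL0 : (0:ℝ) < L := lt_of_lt_of_le one_pos hL
  have hCnn : (0:ℝ) ≤ (Cμ:ℝ) + (Cμ:ℝ)^2 := by positivity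
  refine ⟨4 * L * ((Cμ:ℝ) + (Cμ:ℝ)^2) + 1, by nlinarith, ?_⟩
  intro X _ _ _ μ hdbl hP A ε hA hε u hu x hx
  obtain ⟨K, huK⟩ := hu
  obtain ⟨Aset, hAmeas, hAdens, hAcont⟩ := hx
  have hp0 : (0:ℝ) < p := lt_of_lt_of_le one_pos hp
  have ballpos : ∀ (z : X) (ρ : ℝ), 0 < ρ → 0 < μ (ball z ρ) := fun z ρ h => (hP.1 z ρ h).1
  have ballfin : ∀ (z : X) (ρ : ℝ), 0 < ρ → μ (ball z ρ) < ⊤ := fun z ρ h => (hP.1 z ρ h).2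
  set lx := lipLow u x with hlx
  have hlx0 : 0 ≤ lx := lipLow_nonneg' u x huK
  have hCμ1 : (1:ℝ) ≤ (Cμ:ℝ) := by
    by_contra hcon
    push_neg at hcon
    have hlt : (Cμ : ℝ≥0∞) < 1 := by
      rw [← ENNReal.coe_one, ENNReal.coe_lt_coe]
      exact_mod_cast hcon
    have h1 : μ (ball x 1) ≤ (Cμ : ℝ≥0∞) * μ (ball x 1) := by
      have h2 := hdbl x 1 one_pos
      have h3 : μ (ball x 1) ≤ μ (ball x (2*1)) :=
        measure_mono (ball_subset_ball (by norm_num))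
      exact h3.trans h2
    have h4 : (Cμ : ℝ≥0∞) * μ (ball x 1) < 1 * μ (ball x 1) :=
      (ENNReal.mul_lt_mul_left (ballpos x 1 one_pos).ne' (ballfin x 1 one_pos).ne hlt)
    rw [one_mul] at h4
    exact absurd (h1.trans_lt h4) (lt_irrefl _)
  obtain ⟨m, hm⟩ := pow_unbounded_of_one_lt ((A + L)/L) (one_lt_two (α := ℝ))
  set Cm := (Cμ:ℝ) ^ m with hCm
  have hCm1 : (1:ℝ) ≤ Cm := one_le_pow₀ hCμ1
  -- continuity near x within Aset
  have hev : (fun z => lipLow u z) ⁻¹' Iio (lx + ε) ∈ nhdsWithin x Aset :=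
    hAcont (Iio_mem_nhds (by linarith))
  rw [mem_nhdsWithin] at hev
  obtain ⟨t, htop, hxt, htsub⟩ := hev
  obtain ⟨δ, hδ0, hδball⟩ := Metric.isOpen_iff.mp htop x hxt
  have hδ : ∀ z ∈ Aset, dist z x < δ → lipLow u z < lx + ε := by
    intro z hz hdz
    exact htsub ⟨hδball (mem_ball.mpr hdz), hz⟩
  -- density smallness
  have hKp1 : (0:ℝ) < ((K:ℝ) ^ p + 1) := by
    have : (0:ℝ) ≤ (K:ℝ)^p := Real.rpow_nonneg K.coe_nonneg p
    linarith
  set η0 := ε ^ p / (((K:ℝ) ^ p + 1) * Cm) with hη0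
  have hεppos : (0:ℝ) < ε ^ p := Real.rpow_pos_of_pos hε p
  have hη0pos : 0 < η0 := by
    apply div_pos hεppos
    nlinarith
  have hsm : ∀ᶠ ρ in nhdsWithin (0:ℝ) (Set.Ioi 0),
      μ (ball x ρ \ Aset) / μ (ball x ρ) < ENNReal.ofReal η0 :=
    hAdens (Iio_mem_nhds (by simpa using ENNReal.ofReal_pos.mpr hη0pos))
  rw [(nhdsGT_basis (0:ℝ)).eventually_iff] at hsm
  obtain ⟨b, hb0, hb⟩ := hsm
  have hAL : (0:ℝ) < A + 2 * L := by linarith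
  have hM0 : 0 < min δ b := lt_min hδ0 hb0
  refine ⟨min δ b / (2 * (A + 2 * L)), by positivity, ?_⟩
  -- key average bound
  have key : ∀ r : ℝ, 0 < r → r ≤ min δ b / (2 * (A + 2 * L)) →
      ∀ y : X, y ∈ ball x (A * r) →
      (⨍ z in ball y (L * (2 * r)), (lipLow u z) ^ p ∂μ) ^ (1/p) ≤ 2 * (lx + ε) := by
    intro r hr hrr0 y hy
    set R := L * (2 * r) with hR
    have hRpos : 0 < R := by positivity
    set Rx := (A + 2 * L) * r with hRx
    have hRxpos : 0 < Rx := by positivity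
    have hSr : (A + 2*L) * r ≤ min δ b / 2 := by
      have h1 : (A + 2*L) * r ≤ (A + 2*L) * (min δ b / (2*(A+2*L))) := by nlinarith
      have h2 : (A + 2*L) * (min δ b / (2*(A+2*L))) = min δ b / 2 := by
        field_simp
      linarith
    have hRxδ : Rx < δ := by
      have := min_le_left δ b
      rw [hRx]; linarith
    have hRxb : Rx < b := by
      have := min_le_right δ b
      rw [hRx]; linarith
    have hyx : dist y x < A * r := mem_ball.mp hy
    have hBsubBx : ball y R ⊆ ball x Rx := by
      intro z hz
      rw [mem_ball] at hz ⊢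
      have h1 : dist z x ≤ dist z y + dist y x := dist_triangle z y x
      have h2 : L*(2*r) + A*r = (A+2*L)*r := by ring
      rw [hRx]; rw [hR] at hz; linarith
    have hBxsub : ball x Rx ⊆ ball y (2 ^ m * R) := by
      intro z hz
      rw [mem_ball] at hz ⊢
      have h1 : dist z y ≤ dist z x + dist x y := dist_triangle z x y
      have hxy : dist x y < A * r := by rw [dist_comm]; exact hyx
      have h3 : A + L < 2 ^ m * L := by
        rw [div_lt_iff₀ hL0] at hm; exact hm
      have h2 : Rx + A * r ≤ 2 ^ m * R := by
        rw [hRx, hR]; nlinarith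
      linarith
    have hmux : μ (ball x Rx) ≤ (Cμ:ℝ≥0∞) ^ m * μ (ball y R) :=
      (measure_mono hBxsub).trans (doubling_iter hdbl y hRpos m)
    have hratio := hb ⟨hRxpos, hRxb⟩
    have hnum : μ (ball x Rx \ Aset) < ENNReal.ofReal η0 * μ (ball x Rx) := by
      rw [ENNReal.div_lt_iff (Or.inl (ballpos x Rx hRxpos).ne')
        (Or.inl (ballfin x Rx hRxpos).ne)] at hratio
      exact hratio
    have hdiff : μ (ball y R \ Aset)
        ≤ ENNReal.ofReal η0 * ((Cμ:ℝ≥0∞) ^ m * μ (ball y R)) := by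
      calc μ (ball y R \ Aset) ≤ μ (ball x Rx \ Aset) :=
            measure_mono (diff_subset_diff_left hBsubBx)
        _ ≤ ENNReal.ofReal η0 * μ (ball x Rx) := hnum.le
        _ ≤ _ := mul_le_mul_right hmux _
    have hdiffR : (μ (ball y R \ Aset)).toReal ≤ η0 * (Cm * (μ (ball y R)).toReal) := by
      have hfin2 : ENNReal.ofReal η0 * ((Cμ:ℝ≥0∞) ^ m * μ (ball y R)) ≠ ⊤ :=
        ENNReal.mul_ne_top ENNReal.ofReal_ne_top
          (ENNReal.mul_ne_top (by simp) (ballfin y R hRpos).ne)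
      have h5 := ENNReal.toReal_mono hfin2 hdiff
      rwa [ENNReal.toReal_mul, ENNReal.toReal_mul, ENNReal.toReal_ofReal hη0pos.le,
        ENNReal.toReal_pow, ENNReal.coe_toReal] at h5
    have hKp : (0:ℝ) ≤ (K:ℝ)^p := Real.rpow_nonneg K.coe_nonneg p
    have hCm0 : (0:ℝ) < Cm := by linarith
    have h1 : (K:ℝ)^p * (η0 * Cm) ≤ ε ^ p := by
      have heq : (K:ℝ)^p * (η0 * Cm) = (K:ℝ)^p * ε^p / ((K:ℝ)^p + 1) := by
        rw [hη0]; field_simp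
      rw [heq, div_le_iff₀ hKp1]
      nlinarith
    have hν : ((K:ℝ) ^ p) * (μ (ball y R \ Aset)).toReal
        ≤ ε ^ p * (μ (ball y R)).toReal := by
      calc ((K:ℝ)^p) * (μ (ball y R \ Aset)).toReal
          ≤ (K:ℝ)^p * (η0 * (Cm * (μ (ball y R)).toReal)) :=
            mul_le_mul_of_nonneg_left hdiffR hKp
        _ = ((K:ℝ)^p * (η0*Cm)) * (μ (ball y R)).toReal := by ring
        _ ≤ ε^p * (μ (ball y R)).toReal :=
            mul_le_mul_of_nonneg_right h1 ENNReal.toReal_nonneg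
    have hcontB : ∀ z ∈ Aset ∩ ball y R, lipLow u z ≤ lipLow u x + ε := by
      intro z hz
      have hzx : dist z x < δ := by
        have := hBsubBx hz.2
        rw [mem_ball] at this
        linarith
      exact (hδ z hz.1 hzx).le
    have havg := avg_pow_bound μ huK hp hAmeas hε (ballfin y R hRpos)
      (ballpos y R hRpos) hcontB hν
    have havg0 : 0 ≤ ⨍ z in ball y R, (lipLow u z)^p ∂μ := by
      rw [setAverage_eq, smul_eq_mul]
      exact mul_nonneg (inv_nonneg.mpr ENNReal.toReal_nonneg)
        (setIntegral_nonneg measurableSet_ball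
          (fun z _ => Real.rpow_nonneg (lipLow_nonneg' u z huK) p))
    have h2 : (⨍ z in ball y R, (lipLow u z)^p ∂μ) ^ (1/p)
        ≤ (2 * (lx+ε)^p) ^ (1/p) :=
      Real.rpow_le_rpow havg0 havg (by positivity)
    have h3 : ((2:ℝ) * (lx+ε)^p) ^ (1/p) = 2 ^ (1/p) * ((lx+ε)^p)^(1/p) :=
      Real.mul_rpow (by norm_num) (Real.rpow_nonneg (by linarith) p)
    have h4 : (((lx:ℝ)+ε)^p)^(1/p) = (lx+ε) := by
      rw [← Real.rpow_mul (by linarith : (0:ℝ) ≤ lx + ε), mul_one_div,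
        div_self hp0.ne', Real.rpow_one]
    have h5 : (2:ℝ) ^ (1/p) ≤ 2 := by
      calc (2:ℝ)^(1/p) ≤ 2 ^ (1:ℝ) :=
            Real.rpow_le_rpow_of_exponent_le one_le_two
              (by rw [div_le_one hp0]; exact hp)
        _ = 2 := Real.rpow_one 2
    calc (⨍ z in ball y R, (lipLow u z)^p ∂μ) ^ (1/p)
        ≤ 2^(1/p) * (lx+ε) := by rw [h3, h4] at h2; exact h2
      _ ≤ 2 * (lx+ε) := mul_le_mul_of_nonneg_right h5 (by linarith)
  -- final assembly
  intro r hr hrr0 y y' hy hy' hyy'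
  have h2r : (0:ℝ) < 2 * r := by linarith
  set B2 := ball y (2*r) with hB2
  have hsub1 : ball y r ⊆ B2 := ball_subset_ball (by linarith)
  have hsub2 : ball y' r ⊆ B2 := by
    intro z hz
    rw [mem_ball] at hz ⊢
    have h1 : dist z y ≤ dist z y' + dist y' y := dist_triangle z y' y
    have h2 : dist y' y = dist y y' := dist_comm y' y
    linarith
  have hintu : IntegrableOn u B2 μ := lip_integrableOn μ huK y (2*r) (ballfin y (2*r) h2r)
  set c := ⨍ w in B2, u w ∂μ with hc
  have est1 := avg_diff_le μ hsub1 (ballpos y r hr) (ballfin y r hr)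
    (ballpos y (2*r) h2r) (ballfin y (2*r) h2r) hintu
  have est2 := avg_diff_le μ hsub2 (ballpos y' r hr) (ballfin y' r hr)
    (ballpos y (2*r) h2r) (ballfin y (2*r) h2r) hintu
  have havgabs0 : 0 ≤ ⨍ z in B2, |u z - c| ∂μ := by
    rw [setAverage_eq, smul_eq_mul]
    exact mul_nonneg (inv_nonneg.mpr ENNReal.toReal_nonneg)
      (setIntegral_nonneg measurableSet_ball fun z _ => abs_nonneg _)
  have hr1 : (μ B2).toReal / (μ (ball y r)).toReal ≤ (Cμ:ℝ) := by
    have h := hdbl y r hr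
    have hfin1 := ballfin y r hr
    have h2 : (μ B2).toReal ≤ (Cμ:ℝ) * (μ (ball y r)).toReal := by
      have h3 := ENNReal.toReal_mono (ENNReal.mul_ne_top ENNReal.coe_ne_top hfin1.ne) h
      rwa [ENNReal.toReal_mul, ENNReal.coe_toReal] at h3
    rw [div_le_iff₀ (ENNReal.toReal_pos (ballpos y r hr).ne' hfin1.ne)]
    linarith
  have hr2 : (μ B2).toReal / (μ (ball y' r)).toReal ≤ (Cμ:ℝ)^2 := by
    have hsub3 : B2 ⊆ ball y' (2*(2*r)) := by
      intro z hz
      rw [hB2, mem_ball] at hz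
      rw [mem_ball]
      have h1 : dist z y' ≤ dist z y + dist y y' := dist_triangle z y y'
      linarith
    have hd1 : μ (ball y' (2*(2*r))) ≤ (Cμ:ℝ≥0∞) * μ (ball y' (2*r)) := hdbl y' (2*r) h2r
    have hd2 : μ (ball y' (2*r)) ≤ (Cμ:ℝ≥0∞) * μ (ball y' r) := hdbl y' r hr
    have h : μ B2 ≤ (Cμ:ℝ≥0∞)^2 * μ (ball y' r) := by
      calc μ B2 ≤ μ (ball y' (2*(2*r))) := measure_mono hsub3
        _ ≤ (Cμ:ℝ≥0∞) * μ (ball y' (2*r)) := hd1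
        _ ≤ (Cμ:ℝ≥0∞) * ((Cμ:ℝ≥0∞) * μ (ball y' r)) := mul_le_mul_right hd2 _
        _ = (Cμ:ℝ≥0∞)^2 * μ (ball y' r) := by ring
    have h2 : (μ B2).toReal ≤ (Cμ:ℝ)^2 * (μ (ball y' r)).toReal := by
      have hne : ((Cμ:ℝ≥0∞)^2 * μ (ball y' r)) ≠ ⊤ :=
        ENNReal.mul_ne_top (by simp) (ballfin y' r hr).ne
      have h3 := ENNReal.toReal_mono hne h
      rwa [ENNReal.toReal_mul, ENNReal.toReal_pow, ENNReal.coe_toReal] at h3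
    rw [div_le_iff₀ (ENNReal.toReal_pos (ballpos y' r hr).ne' (ballfin y' r hr).ne)]
    linarith
  have hPc := hP.2 u ⟨K, huK⟩ y (2*r) h2r
  have hkeyv := key r hr hrr0 y hy
  have hPbound : ⨍ z in B2, |u z - c| ∂μ ≤ L * (2*r) * (2 * (lx + ε)) := by
    refine hPc.trans ?_
    exact mul_le_mul_of_nonneg_left hkeyv (by positivity)
  have htri : |(⨍ z in ball y r, u z ∂μ) - ⨍ z in ball y' r, u z ∂μ|
      ≤ |(⨍ z in ball y r, u z ∂μ) - c| + |(⨍ z in ball y' r, u z ∂μ) - c| := by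
    have := abs_sub_le (⨍ z in ball y r, u z ∂μ) c (⨍ z in ball y' r, u z ∂μ)
    rwa [abs_sub_comm c (⨍ z in ball y' r, u z ∂μ)] at this
  have hb1 : |(⨍ z in ball y r, u z ∂μ) - c| ≤ (Cμ:ℝ) * ⨍ z in B2, |u z - c| ∂μ :=
    est1.trans (mul_le_mul_of_nonneg_right hr1 havgabs0)
  have hb2 : |(⨍ z in ball y' r, u z ∂μ) - c| ≤ (Cμ:ℝ)^2 * ⨍ z in B2, |u z - c| ∂μ :=
    est2.trans (mul_le_mul_of_nonneg_right hr2 havgabs0)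
  have hfinal : |(⨍ z in ball y r, u z ∂μ) - ⨍ z in ball y' r, u z ∂μ|
      ≤ ((Cμ:ℝ) + (Cμ:ℝ)^2) * (L * (2*r) * (2 * (lx + ε))) := by
    calc |(⨍ z in ball y r, u z ∂μ) - ⨍ z in ball y' r, u z ∂μ|
        ≤ |(⨍ z in ball y r, u z ∂μ) - c| + |(⨍ z in ball y' r, u z ∂μ) - c| := htri
      _ ≤ (Cμ:ℝ) * ⨍ z in B2, |u z - c| ∂μ + (Cμ:ℝ)^2 * ⨍ z in B2, |u z - c| ∂μ :=
          add_le_add hb1 hb2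
      _ = ((Cμ:ℝ) + (Cμ:ℝ)^2) * ⨍ z in B2, |u z - c| ∂μ := by ring
      _ ≤ ((Cμ:ℝ) + (Cμ:ℝ)^2) * (L * (2*r) * (2 * (lx + ε))) :=
          mul_le_mul_of_nonneg_left hPbound hCnn
  refine hfinal.trans ?_
  have hrl : 0 ≤ r * (lx + ε) := mul_nonneg hr.le (by linarith)
  nlinarith
end

section
/- Let (X,d,μ) be a complete metric measure space with μ Borel regular and doubling with constant C_μ, admitting a p-Poincaré inequality with constant L ≥ 1 for some p ≥ 1. Then X is λ-quasiconvex, where λ depends only on C_μ, L and p: every pair of points x, x' ∈ X can be joined by a rectifiable curve in X of length at most λ·d(x,x'). -/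
open Metric MeasureTheory Filter Set
open scoped NNReal ENNReal

namespace QCaux

variable {X : Type*} [MetricSpace X]

/-- Lengths of `ε`-chains from `x₀` to `y`. -/
def chainSet (ε : ℝ) (x₀ y : X) : Set ℝ :=
  {ℓ | ∃ (m : ℕ) (z : ℕ → X), z 0 = x₀ ∧ z m = y ∧ (∀ i < m, dist (z i) (z (i+1)) < ε) ∧
    (∑ i ∈ Finset.range m, dist (z i) (z (i+1))) = ℓ}

/-- Truncated chain distance function. -/
noncomputable def chainFn (ε M : ℝ) (x₀ : X) (y : X) : ℝ :=
  sInf (insert M ((fun ℓ => min ℓ M) '' chainSet ε x₀ y))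

lemma chainSet_nonneg {ε : ℝ} {x₀ y : X} {ℓ : ℝ} (h : ℓ ∈ chainSet ε x₀ y) : 0 ≤ ℓ := by
  obtain ⟨m, z, -, -, -, rfl⟩ := h
  exact Finset.sum_nonneg fun i _ => dist_nonneg

lemma zero_mem_chainSet (ε : ℝ) (x₀ : X) : (0:ℝ) ∈ chainSet ε x₀ x₀ :=
  ⟨0, fun _ => x₀, rfl, rfl, fun i h => absurd h (Nat.not_lt_zero i), by simp⟩

lemma chainFn_bddBelow (ε M : ℝ) (hM : 0 ≤ M) (x₀ y : X) :
    BddBelow (insert M ((fun ℓ => min ℓ M) '' chainSet ε x₀ y)) := by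
  refine ⟨0, ?_⟩
  rintro t (rfl | ⟨ℓ, hℓ, rfl⟩)
  · exact hM
  · exact le_min (chainSet_nonneg hℓ) hM

lemma chainFn_nonneg (ε M : ℝ) (hM : 0 ≤ M) (x₀ y : X) : 0 ≤ chainFn ε M x₀ y := by
  refine le_csInf ⟨M, mem_insert _ _⟩ ?_
  rintro t (rfl | ⟨ℓ, hℓ, rfl⟩)
  · exact hM
  · exact le_min (chainSet_nonneg hℓ) hM

lemma chainFn_le_M (ε M : ℝ) (hM : 0 ≤ M) (x₀ y : X) : chainFn ε M x₀ y ≤ M :=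
  csInf_le (chainFn_bddBelow ε M hM x₀ y) (mem_insert _ _)

lemma chainFn_le_of_mem {ε M : ℝ} (hM : 0 ≤ M) {x₀ y : X} {ℓ : ℝ} (h : ℓ ∈ chainSet ε x₀ y) :
    chainFn ε M x₀ y ≤ min ℓ M :=
  csInf_le (chainFn_bddBelow ε M hM x₀ y) (mem_insert_of_mem _ ⟨ℓ, h, rfl⟩)

lemma chainFn_self (ε M : ℝ) (hM : 0 ≤ M) (x₀ : X) : chainFn ε M x₀ x₀ = 0 :=
  le_antisymm (by simpa [hM] using chainFn_le_of_mem hM (zero_mem_chainSet ε x₀))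
    (chainFn_nonneg ε M hM x₀ x₀)

lemma chainSet_extend {ε : ℝ} {x₀ y y' : X} {ℓ : ℝ} (h : ℓ ∈ chainSet ε x₀ y)
    (hd : dist y y' < ε) : ℓ + dist y y' ∈ chainSet ε x₀ y' := by
  obtain ⟨m, z, hz0, hzm, hstep, hsum⟩ := h
  refine ⟨m + 1, fun i => if i < m + 1 then z i else y', by simp [hz0], by simp, ?_, ?_⟩
  · intro i hi
    rcases Nat.lt_succ_iff_lt_or_eq.1 hi with hi' | rfl
    · simpa [Nat.lt_succ_of_lt hi', Nat.succ_lt_succ hi'] using hstep i hi'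
    · simpa [Nat.lt_succ_self, hzm] using hd
  · rw [Finset.sum_range_succ]
    have : ∀ i < m, dist (if i < m + 1 then z i else y') (if i + 1 < m + 1 then z (i+1) else y')
        = dist (z i) (z (i+1)) := by
      intro i hi; simp [Nat.lt_succ_of_lt hi, Nat.succ_lt_succ hi]
    rw [Finset.sum_congr rfl fun i hi => this i (Finset.mem_range.1 hi)]
    simp [hsum, Nat.lt_succ_self, hzm]

lemma chainFn_le_add {ε M : ℝ} (hM : 0 ≤ M) {x₀ y y' : X} (hd : dist y y' < ε) :
    chainFn ε M x₀ y' ≤ chainFn ε M x₀ y + dist y y' := by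
  rw [← sub_le_iff_le_add]
  conv_rhs => rw [chainFn]
  refine le_csInf ⟨M, mem_insert _ _⟩ ?_
  rintro u hu
  rcases Set.mem_insert_iff.1 hu with h | ⟨ℓ, hℓ, rfl⟩
  · rw [h]
    have := chainFn_le_M ε M hM x₀ y'
    have h0 := dist_nonneg (x := y) (y := y')
    linarith
  · have h1 : chainFn ε M x₀ y' ≤ min (ℓ + dist y y') M :=
      chainFn_le_of_mem hM (chainSet_extend hℓ hd)
    have h2 : min (ℓ + dist y y') M ≤ min ℓ M + dist y y' := by
      rcases le_total ℓ M with h | h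
      · exact (min_le_left _ _).trans (by rw [min_eq_left h])
      · rw [min_eq_right h]
        exact (min_le_right _ _).trans (le_add_of_nonneg_right dist_nonneg)
    linarith

lemma chainFn_abs_sub {ε M : ℝ} (hM : 0 ≤ M) {x₀ y y' : X} (hd : dist y y' < ε) :
    |chainFn ε M x₀ y - chainFn ε M x₀ y'| ≤ dist y y' := by
  rw [abs_sub_le_iff]
  constructor
  · have := chainFn_le_add (x₀ := x₀) hM (by rwa [dist_comm] : dist y' y < ε)
    have hc := dist_comm y y'
    linarith
  · linarith [chainFn_le_add (x₀ := x₀) hM hd]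

lemma chainFn_lipschitzWith {ε M : ℝ} (hε : 0 < ε) (hM : 0 ≤ M) (x₀ : X) :
    LipschitzWith (Real.toNNReal (max 1 (M / ε))) (chainFn ε M x₀) := by
  apply LipschitzWith.of_dist_le_mul
  intro y y'
  rw [Real.dist_eq, Real.coe_toNNReal _ (le_max_of_le_left zero_le_one)]
  rcases lt_or_ge (dist y y') ε with h | h
  · exact (chainFn_abs_sub hM h).trans
      (le_mul_of_one_le_left dist_nonneg (le_max_left _ _))
  · have h1 : |chainFn ε M x₀ y - chainFn ε M x₀ y'| ≤ M := by
      rw [abs_sub_le_iff]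
      constructor
      · linarith [chainFn_le_M ε M hM x₀ y, chainFn_nonneg ε M hM x₀ y']
      · linarith [chainFn_le_M ε M hM x₀ y', chainFn_nonneg ε M hM x₀ y]
    refine h1.trans ?_
    have h2 : M = (M / ε) * ε := by field_simp
    calc M = (M/ε) * ε := h2
    _ ≤ (M/ε) * dist y y' := by
        apply mul_le_mul_of_nonneg_left h (div_nonneg hM hε.le)
    _ ≤ max 1 (M/ε) * dist y y' := by
        apply mul_le_mul_of_nonneg_right (le_max_right _ _) dist_nonneg

lemma varBall_nonneg {f : X → ℝ} {x : X} {r : ℝ} (hr : 0 < r) : 0 ≤ varBall f x r := by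
  apply Real.sSup_nonneg
  rintro v ⟨y, -, rfl⟩
  positivity

lemma varBall_le_of_lip {f : X → ℝ} {K : ℝ≥0} (hf : LipschitzWith K f) (x : X) {r : ℝ}
    (hr : 0 < r) : varBall f x r ≤ K := by
  apply Real.sSup_le _ K.coe_nonneg
  rintro v ⟨y, hy, rfl⟩
  rw [div_le_iff₀ hr]
  calc |f y - f x| = dist (f y) (f x) := (Real.dist_eq _ _).symm
  _ ≤ K * dist y x := hf.dist_le_mul y x
  _ ≤ K * r := mul_le_mul_of_nonneg_left (le_of_lt (mem_ball.1 hy)) K.coe_nonneg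

lemma chainFn_varBall_le_one {ε M : ℝ} (hM : 0 ≤ M) (x₀ : X) {x : X} {r : ℝ}
    (hr : 0 < r) (hrε : r ≤ ε) : varBall (chainFn ε M x₀) x r ≤ 1 := by
  apply Real.sSup_le _ zero_le_one
  rintro v ⟨y, hy, rfl⟩
  rw [div_le_one hr]
  have hd : dist y x < ε := lt_of_lt_of_le (mem_ball.1 hy) hrε
  have h := chainFn_abs_sub (x₀ := x₀) hM hd
  exact h.trans (le_of_lt (mem_ball.1 hy))

lemma lipLow_nonneg_of_lip {f : X → ℝ} {K : ℝ≥0} (hf : LipschitzWith K f) (x : X) :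
    0 ≤ lipLow f x := by
  apply Filter.le_liminf_of_le
  · apply Filter.isCoboundedUnder_ge_of_eventually_le _ (x := (K:ℝ))
    · filter_upwards [self_mem_nhdsWithin] with r hr
      exact varBall_le_of_lip hf x hr
  · filter_upwards [self_mem_nhdsWithin] with r hr
    exact varBall_nonneg hr

lemma lipLow_le_one_of_small {f : X → ℝ} {ε : ℝ} (hε : 0 < ε)
    (hvar : ∀ x : X, ∀ r : ℝ, 0 < r → r ≤ ε → varBall f x r ≤ 1) (x : X) :
    lipLow f x ≤ 1 := by
  apply Filter.liminf_le_of_le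
  · refine ⟨0, ?_⟩
    rw [Filter.eventually_map]
    filter_upwards [self_mem_nhdsWithin] with r hr
    exact varBall_nonneg hr
  · intro b hb
    have h1 : ∀ᶠ r in nhdsWithin 0 (Set.Ioi (0:ℝ)), varBall f x r ≤ 1 := by
      filter_upwards [Ioo_mem_nhdsGT_of_mem (Set.mem_Ico.2 ⟨le_refl 0, hε⟩)] with r hr
      exact hvar x r hr.1 hr.2.le
    obtain ⟨r, hbr, hr1⟩ := (hb.and h1).exists
    exact hbr.trans hr1

lemma chainFn_lipLow_le_one {ε M : ℝ} (hε : 0 < ε) (hM : 0 ≤ M) (x₀ x : X) :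
    lipLow (chainFn ε M x₀) x ≤ 1 :=
  lipLow_le_one_of_small hε (fun x r hr hrε => chainFn_varBall_le_one hM x₀ hr hrε) x

lemma chainFn_extract {ε M : ℝ} (hM : 0 ≤ M) {x₀ y : X} {c θ : ℝ} (hθ : 0 < θ)
    (hc : chainFn ε M x₀ y ≤ c) (hcM : c + θ ≤ M) :
    ∃ ℓ ∈ chainSet ε x₀ y, ℓ < c + θ := by
  have hlt : sInf (insert M ((fun ℓ => min ℓ M) '' chainSet ε x₀ y)) < c + θ :=
    lt_of_le_of_lt hc (by linarith)
  obtain ⟨t, ht, htlt⟩ := exists_lt_of_csInf_lt ⟨M, Set.mem_insert _ _⟩ hlt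
  rcases Set.mem_insert_iff.1 ht with h | ⟨ℓ, hℓ, rfl⟩
  · rw [h] at htlt; linarith
  · simp only [] at htlt
    rcases le_total ℓ M with h | h
    · rw [min_eq_left h] at htlt; exact ⟨ℓ, hℓ, htlt⟩
    · rw [min_eq_right h] at htlt; linarith


section MeasurePart

variable [MeasurableSpace X] [BorelSpace X]

/-- Average of `f` over the ball `B(y,r)`. -/
noncomputable def ballAvg (μ : Measure X) (f : X → ℝ) (y : X) (r : ℝ) : ℝ :=
  ⨍ z in Metric.ball y r, f z ∂μ

lemma integrableOn_ball_of_lip {μ : Measure X} {f : X → ℝ} {K : ℝ≥0}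
    (hf : LipschitzWith K f) {y : X} {r : ℝ} (hfin : μ (Metric.ball y r) < ⊤) :
    IntegrableOn f (Metric.ball y r) μ := by
  refine Integrable.mono' (g := fun _ => |f y| + K * r)
    (integrableOn_const hfin.ne)
    (hf.continuous.aestronglyMeasurable.restrict) ?_
  refine (ae_restrict_iff' measurableSet_ball).2 (ae_of_all _ fun z hz => ?_)
  have h1 : |f z - f y| ≤ K * dist z y := by
    rw [← Real.dist_eq]; exact hf.dist_le_mul z y
  have h2 : dist z y < r := mem_ball.1 hz
  have hK : (0:ℝ) ≤ K := K.coe_nonneg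
  calc ‖f z‖ = |f z| := rfl
  _ ≤ |f y| + |f z - f y| := by
      have := abs_sub_abs_le_abs_sub (f z) (f y); linarith [abs_nonneg (f z)]
  _ ≤ |f y| + K * r := by nlinarith

lemma avg_sub_le {μ : Measure X} {f : X → ℝ} {y : X} {r : ℝ}
    (hpos : 0 < μ (Metric.ball y r)) (hfin : μ (Metric.ball y r) < ⊤)
    (hfi : IntegrableOn f (Metric.ball y r) μ) (t : ℝ) :
    |ballAvg μ f y r - t| ≤
      (μ (Metric.ball y r)).toReal⁻¹ * ∫ z in Metric.ball y r, |f z - t| ∂μ := by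
  set c := (μ (Metric.ball y r)).toReal with hc
  have hc0 : 0 < c := ENNReal.toReal_pos hpos.ne' hfin.ne
  have hsub : ∫ z in Metric.ball y r, (f z - t) ∂μ
      = (∫ z in Metric.ball y r, f z ∂μ) - c * t := by
    rw [integral_sub hfi (integrableOn_const hfin.ne), setIntegral_const,
      smul_eq_mul, measureReal_def]
  have h1 : ballAvg μ f y r - t = c⁻¹ * ∫ z in Metric.ball y r, (f z - t) ∂μ := by
    rw [ballAvg, setAverage_eq, hsub, smul_eq_mul, measureReal_def, ← hc]
    field_simp
  have h2 : |∫ z in Metric.ball y r, (f z - t) ∂μ| ≤ ∫ z in Metric.ball y r, |f z - t| ∂μ := by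
    simpa [Real.norm_eq_abs] using
      norm_integral_le_integral_norm (μ := μ.restrict (Metric.ball y r)) (fun z => f z - t)
  rw [h1, abs_mul, abs_of_nonneg (inv_nonneg.2 hc0.le)]
  exact mul_le_mul_of_nonneg_left h2 (inv_nonneg.2 hc0.le)

lemma poincare_L1 {μ : Measure X} {L p : ℝ} (hL : 1 ≤ L) (hp : 1 ≤ p)
    {f : X → ℝ} (hlip0 : ∀ z, 0 ≤ lipLow f z) (hlip1 : ∀ z, lipLow f z ≤ 1)
    {y : X} {r : ℝ} (hr : 0 < r)
    (hpos : 0 < μ (Metric.ball y r)) (hfin : μ (Metric.ball y r) < ⊤)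
    (hfinL : μ (Metric.ball y (L*r)) < ⊤)
    (hpoin : ⨍ z in Metric.ball y r, |f z - ⨍ w in Metric.ball y r, f w ∂μ| ∂μ ≤
      L * r * (⨍ z in Metric.ball y (L*r), lipLow f z ^ p ∂μ) ^ (1/p)) :
    ∫ z in Metric.ball y r, |f z - ballAvg μ f y r| ∂μ ≤
      (μ (Metric.ball y r)).toReal * (L * r) := by
  have hLr : (0:ℝ) < L * r := mul_pos (lt_of_lt_of_le one_pos hL) hr
  set v := ⨍ z in Metric.ball y (L*r), lipLow f z ^ p ∂μ with hv
  have hv0 : 0 ≤ v := by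
    rw [hv, setAverage_eq, smul_eq_mul]
    have : 0 ≤ ∫ z in Metric.ball y (L*r), lipLow f z ^ p ∂μ :=
      integral_nonneg fun z => Real.rpow_nonneg (hlip0 z) p
    positivity
  have hv1 : v ≤ 1 := by
    rw [hv, setAverage_eq, smul_eq_mul, measureReal_def]
    by_cases hi : IntegrableOn (fun z => lipLow f z ^ p) (Metric.ball y (L*r)) μ
    · have h1 : ∫ z in Metric.ball y (L*r), lipLow f z ^ p ∂μ ≤
          ∫ _z in Metric.ball y (L*r), (1:ℝ) ∂μ := by
        refine integral_mono hi (integrableOn_const hfinL.ne) fun z => ?_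
        exact Real.rpow_le_one (hlip0 z) (hlip1 z) (by linarith)
      rw [setIntegral_const, smul_eq_mul, mul_one, measureReal_def] at h1
      rcases eq_or_ne (μ (Metric.ball y (L*r))).toReal 0 with h0 | h0
      · rw [h0]; simp
      · have hpos' : 0 < (μ (Metric.ball y (L*r))).toReal := lt_of_le_of_ne
          ENNReal.toReal_nonneg (Ne.symm h0)
        rw [inv_mul_le_iff₀ hpos', mul_one]
        exact h1
    · rw [integral_undef hi, mul_zero]; exact zero_le_one
  have hrpow : v ^ (1/p) ≤ 1 := Real.rpow_le_one hv0 hv1 (by positivity)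
  have hmain : ⨍ z in Metric.ball y r, |f z - ballAvg μ f y r| ∂μ ≤ L * r := by
    refine (hpoin.trans ?_)
    calc L * r * v ^ (1/p) ≤ L * r * 1 := by
          exact mul_le_mul_of_nonneg_left hrpow hLr.le
    _ = L * r := mul_one _
  have hc0 : 0 < (μ (Metric.ball y r)).toReal := ENNReal.toReal_pos hpos.ne' hfin.ne
  have heq : ⨍ z in Metric.ball y r, |f z - ballAvg μ f y r| ∂μ =
      (μ (Metric.ball y r)).toReal⁻¹ * ∫ z in Metric.ball y r, |f z - ballAvg μ f y r| ∂μ := by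
    rw [setAverage_eq, smul_eq_mul, measureReal_def]
  rw [heq, inv_mul_le_iff₀ hc0] at hmain
  calc ∫ z in Metric.ball y r, |f z - ballAvg μ f y r| ∂μ ≤
      (μ (Metric.ball y r)).toReal * (L * r) := by rw [mul_comm] at hmain ⊢; exact hmain
  _ = _ := rfl


lemma avg_diff_le {μ : Measure X} {L : ℝ} {f : X → ℝ} {y₁ y₂ : X} {r₁ r₂ : ℝ} {c : ℝ≥0}
    (hpos₁ : 0 < μ (Metric.ball y₁ r₁)) (hfin₁ : μ (Metric.ball y₁ r₁) < ⊤)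
    (hfin₂ : μ (Metric.ball y₂ r₂) < ⊤)
    (hsub : Metric.ball y₁ r₁ ⊆ Metric.ball y₂ r₂)
    (hratio : μ (Metric.ball y₂ r₂) ≤ (c:ℝ≥0∞) * μ (Metric.ball y₁ r₁))
    (hfi : IntegrableOn f (Metric.ball y₂ r₂) μ)
    (hLr : 0 ≤ L * r₂)
    (hpoint : ∫ z in Metric.ball y₂ r₂, |f z - ballAvg μ f y₂ r₂| ∂μ ≤
      (μ (Metric.ball y₂ r₂)).toReal * (L * r₂)) :
    |ballAvg μ f y₁ r₁ - ballAvg μ f y₂ r₂| ≤ c * (L * r₂) := by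
  set a₁ := (μ (Metric.ball y₁ r₁)).toReal with ha₁def
  set a₂ := (μ (Metric.ball y₂ r₂)).toReal with ha₂def
  have ha₁ : 0 < a₁ := ENNReal.toReal_pos hpos₁.ne' hfin₁.ne
  have h1 : |ballAvg μ f y₁ r₁ - ballAvg μ f y₂ r₂| ≤
      a₁⁻¹ * ∫ z in Metric.ball y₁ r₁, |f z - ballAvg μ f y₂ r₂| ∂μ :=
    avg_sub_le hpos₁ hfin₁ (hfi.mono_set hsub) _
  have h2 : ∫ z in Metric.ball y₁ r₁, |f z - ballAvg μ f y₂ r₂| ∂μ ≤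
      ∫ z in Metric.ball y₂ r₂, |f z - ballAvg μ f y₂ r₂| ∂μ :=
    setIntegral_mono_set ((hfi.sub (integrableOn_const hfin₂.ne)).abs)
      (ae_of_all _ fun z => abs_nonneg _) (HasSubset.Subset.eventuallyLE hsub)
  have hratio' : a₂ ≤ (c:ℝ) * a₁ := by
    have hne : (c:ℝ≥0∞) * μ (Metric.ball y₁ r₁) ≠ ⊤ :=
      ENNReal.mul_ne_top ENNReal.coe_ne_top hfin₁.ne
    have := ENNReal.toReal_mono hne hratio
    rwa [ENNReal.toReal_mul, ENNReal.coe_toReal] at this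
  have h4 : a₁⁻¹ * ∫ z in Metric.ball y₁ r₁, |f z - ballAvg μ f y₂ r₂| ∂μ ≤
      a₁⁻¹ * (a₂ * (L * r₂)) := by
    apply mul_le_mul_of_nonneg_left (h2.trans hpoint) (inv_nonneg.2 ha₁.le)
  have h5 : a₁⁻¹ * (a₂ * (L * r₂)) ≤ (c:ℝ) * (L * r₂) := by
    rw [inv_mul_le_iff₀ ha₁]
    nlinarith [mul_le_mul_of_nonneg_right hratio' hLr]
  linarith

lemma tail_est {μ : Measure X} {f : X → ℝ} {K : ℝ≥0} (hf : LipschitzWith K f)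
    {z : X} {r : ℝ} (hr : 0 < r)
    (hpos : 0 < μ (Metric.ball z r)) (hfin : μ (Metric.ball z r) < ⊤) :
    |ballAvg μ f z r - f z| ≤ K * r := by
  have hfi : IntegrableOn f (Metric.ball z r) μ := integrableOn_ball_of_lip hf hfin
  set a := (μ (Metric.ball z r)).toReal with hadef
  have ha : 0 < a := ENNReal.toReal_pos hpos.ne' hfin.ne
  have h1 := avg_sub_le hpos hfin hfi (f z)
  have h2 : ∫ w in Metric.ball z r, |f w - f z| ∂μ ≤ a * ((K:ℝ) * r) := by
    have h3 : ∫ w in Metric.ball z r, |f w - f z| ∂μ ≤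
        ∫ _w in Metric.ball z r, (K:ℝ) * r ∂μ := by
      refine setIntegral_mono_on ((hfi.sub (integrableOn_const hfin.ne)).abs)
        (integrableOn_const hfin.ne) measurableSet_ball fun w hw => ?_
      have := hf.dist_le_mul w z
      rw [Real.dist_eq] at this
      have hd : dist w z < r := mem_ball.1 hw
      have hK : (0:ℝ) ≤ K := K.coe_nonneg
      nlinarith
    rwa [setIntegral_const, smul_eq_mul, measureReal_def] at h3
  have h4 : a⁻¹ * ∫ w in Metric.ball z r, |f w - f z| ∂μ ≤ (K:ℝ) * r := by
    rw [inv_mul_le_iff₀ ha]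
    calc ∫ w in Metric.ball z r, |f w - f z| ∂μ ≤ a * ((K:ℝ) * r) := h2
    _ = (K:ℝ) * r * a := by ring
    _ ≤ a * ((K:ℝ) * r) := by ring_nf; exact le_refl _
  calc |ballAvg μ f z r - f z| ≤
      a⁻¹ * ∫ w in Metric.ball z r, |f w - f z| ∂μ := h1
  _ ≤ (K:ℝ) * r := h4

lemma telescope_est {μ : Measure X} {Cμ : ℝ≥0} {L : ℝ} {f : X → ℝ} {K : ℝ≥0}
    (hf : LipschitzWith K f)
    (hC : ∀ (x : X) (r : ℝ), 0 < r →
      μ (Metric.ball x (2*r)) ≤ (Cμ:ℝ≥0∞) * μ (Metric.ball x r))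
    (hPfin : ∀ (x : X) (r : ℝ), 0 < r →
      0 < μ (Metric.ball x r) ∧ μ (Metric.ball x r) < ⊤)
    (hL0 : 0 < L)
    (hpoint : ∀ (y : X) (r : ℝ), 0 < r →
      ∫ z in Metric.ball y r, |f z - ballAvg μ f y r| ∂μ ≤
        (μ (Metric.ball y r)).toReal * (L * r))
    (z : X) {R : ℝ} (hR : 0 < R) :
    |f z - ballAvg μ f z R| ≤ 2 * Cμ * L * R := by
  set g : ℕ → ℝ := fun i => ballAvg μ f z (R / 2^i) with hg
  have hrpos : ∀ i : ℕ, (0:ℝ) < R / 2^i := fun i => by positivity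
  have h2r : ∀ i : ℕ, (2:ℝ) * (R / 2^(i+1)) = R / 2^i := by
    intro i; field_simp; ring
  have hstep : ∀ i : ℕ, |g (i+1) - g i| ≤ (Cμ:ℝ) * (L * (R / 2^i)) := by
    intro i
    refine avg_diff_le (hPfin z _ (hrpos (i+1))).1 (hPfin z _ (hrpos (i+1))).2
      (hPfin z _ (hrpos i)).2 ?_ ?_ (integrableOn_ball_of_lip hf (hPfin z _ (hrpos i)).2)
      (by positivity) (hpoint z _ (hrpos i))
    · exact Metric.ball_subset_ball (by rw [← h2r i]; nlinarith [hrpos (i+1)])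
    · rw [← h2r i]; exact hC z _ (hrpos (i+1))
  have hchain : ∀ n : ℕ, |g 0 - g n| ≤ ∑ i ∈ Finset.range n, (Cμ:ℝ) * (L * (R / 2^i)) := by
    intro n
    induction n with
    | zero => simp
    | succ n ih =>
      rw [Finset.sum_range_succ]
      calc |g 0 - g (n+1)| ≤ |g 0 - g n| + |g (n+1) - g n| := by
            rw [abs_sub_comm (g (n+1))]; exact abs_sub_le _ _ _
      _ ≤ _ := add_le_add ih (hstep n)
  have hsum : ∀ n : ℕ, ∑ i ∈ Finset.range n, (Cμ:ℝ) * (L * (R / 2^i)) ≤ 2 * Cμ * L * R := by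
    intro n
    have : ∀ i : ℕ, (Cμ:ℝ) * (L * (R / 2^i)) = ((Cμ:ℝ) * L * R) * (1/2)^i := by
      intro i
      rw [div_pow, one_pow]
      field_simp
    rw [Finset.sum_congr rfl fun i _ => this i, ← Finset.mul_sum]
    have h2 := sum_geometric_two_le n
    have hnn : (0:ℝ) ≤ (Cμ:ℝ) * L * R := by positivity
    nlinarith
  have htail : ∀ n : ℕ, |g n - f z| ≤ (K:ℝ) * (R / 2^n) := fun n =>
    tail_est hf (hrpos n) (hPfin z _ (hrpos n)).1 (hPfin z _ (hrpos n)).2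
  have hall : ∀ n : ℕ, |f z - g 0| ≤ 2 * Cμ * L * R + (K:ℝ) * (R / 2^n) := by
    intro n
    calc |f z - g 0| ≤ |g 0 - g n| + |g n - f z| := by
          rw [abs_sub_comm (f z)]; exact abs_sub_le _ _ _
    _ ≤ _ := add_le_add ((hchain n).trans (hsum n)) (htail n)
  have hfinal : |f z - g 0| ≤ 2 * Cμ * L * R := by
    refine le_of_forall_pos_le_add fun ε hε => ?_
    obtain ⟨n, hn⟩ := pow_unbounded_of_one_lt (y := (2:ℝ)) ((K:ℝ) * R / ε) one_lt_two
    refine (hall n).trans (add_le_add_right ?_ _)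
    rw [div_lt_iff₀ hε] at hn
    have h2n : (0:ℝ) < 2^n := by positivity
    calc (K:ℝ) * (R / 2^n) = (K:ℝ) * R / 2^n := by ring
    _ ≤ ε := by rw [div_le_iff₀ h2n]; nlinarith
  simpa [hg] using hfinal


lemma main_est {μ : Measure X} {Cμ : ℝ≥0} {L p : ℝ} (hL : 1 ≤ L) (hp : 1 ≤ p)
    (hC : ∀ (x : X) (r : ℝ), 0 < r →
      μ (Metric.ball x (2*r)) ≤ (Cμ:ℝ≥0∞) * μ (Metric.ball x r))
    (hPfin : ∀ (x : X) (r : ℝ), 0 < r →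
      0 < μ (Metric.ball x r) ∧ μ (Metric.ball x r) < ⊤)
    {f : X → ℝ} {K : ℝ≥0} (hf : LipschitzWith K f)
    (hlip0 : ∀ z, 0 ≤ lipLow f z) (hlip1 : ∀ z, lipLow f z ≤ 1)
    (hpoin : ∀ (x : X) (r : ℝ), 0 < r →
      ⨍ y in Metric.ball x r, |f y - ⨍ z in Metric.ball x r, f z ∂μ| ∂μ ≤
        L * r * (⨍ z in Metric.ball x (L*r), lipLow f z ^ p ∂μ) ^ (1/p))
    {x₀ x₁ : X} (hR : 0 < dist x₀ x₁) :
    |f x₁ - f x₀| ≤ (6 * Cμ + 2 * (Cμ:ℝ)^2) * L * dist x₀ x₁ := by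
  set R := dist x₀ x₁ with hRdef
  have hL0 : 0 < L := lt_of_lt_of_le one_pos hL
  have hpoint : ∀ (y : X) (r : ℝ), 0 < r →
      ∫ z in Metric.ball y r, |f z - ballAvg μ f y r| ∂μ ≤
        (μ (Metric.ball y r)).toReal * (L * r) := by
    intro y r hr
    exact poincare_L1 hL hp hlip0 hlip1 hr (hPfin y r hr).1 (hPfin y r hr).2
      (hPfin y (L*r) (by positivity)).2 (hpoin y r hr)
  have tele : ∀ (z : X) (r : ℝ), 0 < r → |f z - ballAvg μ f z r| ≤ 2 * Cμ * L * r :=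
    fun z r hr => telescope_est hf hC hPfin hL0 hpoint z hr
  have h2R : (0:ℝ) < 2 * R := by linarith
  have cross : |ballAvg μ f x₁ R - ballAvg μ f x₀ (2*R)| ≤ ((Cμ:ℝ)^2) * (L * (2*R)) := by
    have hsub : Metric.ball x₁ R ⊆ Metric.ball x₀ (2*R) := by
      intro y hy
      have h1 : dist y x₁ < R := mem_ball.1 hy
      have h2 : dist x₁ x₀ = R := by rw [dist_comm]
      calc dist y x₀ ≤ dist y x₁ + dist x₁ x₀ := dist_triangle _ _ _
      _ < 2 * R := by rw [h2]; linarith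
    have hsub2 : Metric.ball x₀ (2*R) ⊆ Metric.ball x₁ (2*(2*R)) := by
      intro y hy
      have h1 : dist y x₀ < 2*R := mem_ball.1 hy
      calc dist y x₁ ≤ dist y x₀ + dist x₀ x₁ := dist_triangle _ _ _
      _ < 2*(2*R) := by linarith
    have hratio : μ (Metric.ball x₀ (2*R)) ≤ ((Cμ^2 : ℝ≥0):ℝ≥0∞) * μ (Metric.ball x₁ R) := by
      calc μ (Metric.ball x₀ (2*R)) ≤ μ (Metric.ball x₁ (2*(2*R))) := measure_mono hsub2
      _ ≤ (Cμ:ℝ≥0∞) * μ (Metric.ball x₁ (2*R)) := hC x₁ (2*R) h2R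
      _ ≤ (Cμ:ℝ≥0∞) * ((Cμ:ℝ≥0∞) * μ (Metric.ball x₁ R)) :=
          mul_le_mul_right (hC x₁ R hR) _
      _ = ((Cμ^2 : ℝ≥0):ℝ≥0∞) * μ (Metric.ball x₁ R) := by
          rw [ENNReal.coe_pow]; ring
    have := avg_diff_le (c := Cμ^2) (hPfin x₁ R hR).1 (hPfin x₁ R hR).2
      (hPfin x₀ (2*R) h2R).2 hsub hratio
      (integrableOn_ball_of_lip hf (hPfin x₀ (2*R) h2R).2) (by positivity)
      (hpoint x₀ (2*R) h2R)
    simpa using this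
  have t1 := tele x₁ R hR
  have t2 := tele x₀ (2*R) h2R
  have habs : |f x₁ - f x₀| ≤ |f x₁ - ballAvg μ f x₁ R| +
      |ballAvg μ f x₁ R - ballAvg μ f x₀ (2*R)| + |ballAvg μ f x₀ (2*R) - f x₀| := by
    have := abs_sub_le (f x₁) (ballAvg μ f x₁ R) (f x₀)
    have := abs_sub_le (ballAvg μ f x₁ R) (ballAvg μ f x₀ (2*R)) (f x₀)
    linarith
  have t2' : |ballAvg μ f x₀ (2*R) - f x₀| ≤ 2 * Cμ * L * (2*R) := by
    rw [abs_sub_comm]; exact t2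
  have hCnn : (0:ℝ) ≤ Cμ := Cμ.coe_nonneg
  nlinarith [t1, cross, t2', habs]


lemma doubling_pow {μ : Measure X} {Cμ : ℝ≥0}
    (hC : ∀ (x : X) (r : ℝ), 0 < r →
      μ (Metric.ball x (2*r)) ≤ (Cμ:ℝ≥0∞) * μ (Metric.ball x r))
    (k : ℕ) (x : X) {r : ℝ} (hr : 0 < r) :
    μ (Metric.ball x (2^k * r)) ≤ (Cμ:ℝ≥0∞)^k * μ (Metric.ball x r) := by
  induction k with
  | zero => simp
  | succ k ih =>
    have h1 : (2:ℝ)^(k+1) * r = 2 * (2^k * r) := by ring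
    have h2 : (0:ℝ) < 2^k * r := by positivity
    calc μ (Metric.ball x (2^(k+1) * r)) = μ (Metric.ball x (2 * (2^k * r))) := by rw [h1]
    _ ≤ (Cμ:ℝ≥0∞) * μ (Metric.ball x (2^k * r)) := hC x _ h2
    _ ≤ (Cμ:ℝ≥0∞) * ((Cμ:ℝ≥0∞)^k * μ (Metric.ball x r)) := mul_le_mul_right ih _
    _ = (Cμ:ℝ≥0∞)^(k+1) * μ (Metric.ball x r) := by ring


lemma separated_card_bound {μ : Measure X} {Cμ : ℝ≥0}
    (hC : ∀ (x : X) (r : ℝ), 0 < r →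
      μ (Metric.ball x (2*r)) ≤ (Cμ:ℝ≥0∞) * μ (Metric.ball x r))
    (hPfin : ∀ (x : X) (r : ℝ), 0 < r →
      0 < μ (Metric.ball x r) ∧ μ (Metric.ball x r) < ⊤)
    (x : X) {R δ : ℝ} (hR : 0 < R) (hδ : 0 < δ) :
    ∃ N : ℕ, ∀ t : Finset X, ↑t ⊆ Metric.ball x R →
      ((t : Set X).Pairwise fun a b => δ ≤ dist a b) → t.card ≤ N := by
  obtain ⟨k, hk⟩ := pow_unbounded_of_one_lt (y := (2:ℝ)) ((2*R)/(δ/2)) one_lt_two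
  have hδ2 : (0:ℝ) < δ/2 := by linarith
  have hk' : 2*R < 2^k * (δ/2) := by
    rw [div_lt_iff₀ hδ2] at hk; linarith
  set a := μ (Metric.ball x R) with hadef
  set b := (Cμ:ℝ≥0∞)^k * μ (Metric.ball x (R + δ/2)) with hbdef
  have ha0 : a ≠ 0 := (hPfin x R hR).1.ne'
  have hat : a ≠ ⊤ := (hPfin x R hR).2.ne
  have hbt : b ≠ ⊤ := ENNReal.mul_ne_top (by simp)
    (hPfin x (R + δ/2) (by linarith)).2.ne
  have hQt : b / a ≠ ⊤ := (ENNReal.div_lt_top hbt ha0).ne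
  obtain ⟨N, hN⟩ := ENNReal.exists_nat_gt hQt
  refine ⟨N, fun t hsub hsep => ?_⟩
  -- each small ball has comparable measure
  have hper : ∀ y ∈ t, a ≤ (Cμ:ℝ≥0∞)^k * μ (Metric.ball y (δ/2)) := by
    intro y hy
    have hyx : dist y x < R := mem_ball.1 (hsub hy)
    have hsub2 : Metric.ball x R ⊆ Metric.ball y (2^k * (δ/2)) := by
      intro z hz
      calc dist z y ≤ dist z x + dist x y := dist_triangle _ _ _
      _ < R + R := by rw [dist_comm x y]; exact add_lt_add (mem_ball.1 hz) hyx
      _ ≤ 2^k * (δ/2) := by linarith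
    calc a ≤ μ (Metric.ball y (2^k * (δ/2))) := measure_mono hsub2
    _ ≤ (Cμ:ℝ≥0∞)^k * μ (Metric.ball y (δ/2)) := doubling_pow hC k y hδ2
  have hdisj : (t : Set X).PairwiseDisjoint fun y => Metric.ball y (δ/2) := by
    intro u hu v hv huv
    exact Metric.ball_disjoint_ball (by
      have := hsep hu hv huv; linarith)
  have hunion : ∑ y ∈ t, μ (Metric.ball y (δ/2)) ≤ μ (Metric.ball x (R + δ/2)) := by
    rw [← measure_biUnion_finset hdisj fun y _ => measurableSet_ball]
    apply measure_mono
    intro z hz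
    simp only [Set.mem_iUnion] at hz
    obtain ⟨y, hy, hzy⟩ := hz
    calc dist z x ≤ dist z y + dist y x := dist_triangle _ _ _
    _ < δ/2 + R := add_lt_add (mem_ball.1 hzy) (mem_ball.1 (hsub hy))
    _ ≤ R + δ/2 := by linarith
  have hcard : (t.card : ℝ≥0∞) * a ≤ b := by
    have h1 : t.card • a ≤ ∑ y ∈ t, (Cμ:ℝ≥0∞)^k * μ (Metric.ball y (δ/2)) :=
      Finset.card_nsmul_le_sum t _ a hper
    rw [← Finset.mul_sum] at h1
    rw [← nsmul_eq_mul]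
    exact h1.trans (mul_le_mul_right hunion _)
  have h2 : (t.card : ℝ≥0∞) ≤ b / a :=
    (ENNReal.le_div_iff_mul_le (Or.inl ha0) (Or.inl hat)).2 hcard
  have h3 : (t.card : ℝ≥0∞) < (N : ℝ≥0∞) := lt_of_le_of_lt h2 hN
  exact_mod_cast h3.le

lemma totallyBounded_ball_of_doubling {μ : Measure X} {Cμ : ℝ≥0}
    (hC : ∀ (x : X) (r : ℝ), 0 < r →
      μ (Metric.ball x (2*r)) ≤ (Cμ:ℝ≥0∞) * μ (Metric.ball x r))
    (hPfin : ∀ (x : X) (r : ℝ), 0 < r →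
      0 < μ (Metric.ball x r) ∧ μ (Metric.ball x r) < ⊤)
    (x : X) (R : ℝ) : TotallyBounded (Metric.ball x R) := by
  rcases le_or_gt R 0 with hR | hR
  · rw [Metric.ball_eq_empty.2 hR]; exact totallyBounded_empty
  rw [Metric.totallyBounded_iff]
  intro δ hδ
  obtain ⟨N, hN⟩ := separated_card_bound hC hPfin x hR hδ
  -- set of achievable cardinalities of δ-separated subsets
  set S : Set ℕ := {n | ∃ t : Finset X, ↑t ⊆ Metric.ball x R ∧
    ((t : Set X).Pairwise fun a b => δ ≤ dist a b) ∧ t.card = n} with hSdef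
  have hS0 : (0:ℕ) ∈ S := ⟨∅, by simp, by simp, rfl⟩
  have hSbdd : BddAbove S := by
    refine ⟨N, ?_⟩
    rintro n ⟨t, ht1, ht2, rfl⟩
    exact hN t ht1 ht2
  have hmem := Nat.sSup_mem ⟨0, hS0⟩ hSbdd
  obtain ⟨t, ht1, ht2, htc⟩ := hmem
  refine ⟨↑t, t.finite_toSet, ?_⟩
  classical
  intro z hz
  by_contra hcon
  simp only [Set.mem_iUnion] at hcon
  push_neg at hcon
  have hzt : z ∉ t := fun h => by
    have := hcon z h; simp [hδ] at this
  have hsep' : ((insert z t : Finset X) : Set X).Pairwise fun a b => δ ≤ dist a b := by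
    intro u hu v hv huv
    simp only [Finset.coe_insert, Set.mem_insert_iff] at hu hv
    rcases hu with rfl | hu <;> rcases hv with rfl | hv
    · exact absurd rfl huv
    · have := hcon v hv
      rw [mem_ball, not_lt] at this
      exact this
    · have := hcon u hu
      rw [mem_ball, not_lt] at this
      rwa [dist_comm] at this
    · exact ht2 hu hv huv
  have hmem' : t.card + 1 ∈ S := by
    refine ⟨insert z t, ?_, hsep', ?_⟩
    · intro w hw
      simp only [Finset.coe_insert, Set.mem_insert_iff] at hw
      rcases hw with rfl | hw
      · exact hz
      · exact ht1 hw
    · rw [Finset.card_insert_of_notMem hzt]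
  have := le_csSup hSbdd hmem'
  rw [htc] at this
  omega

lemma isCompact_closedBall_of_doubling [CompleteSpace X] {μ : Measure X} {Cμ : ℝ≥0}
    (hC : ∀ (x : X) (r : ℝ), 0 < r →
      μ (Metric.ball x (2*r)) ≤ (Cμ:ℝ≥0∞) * μ (Metric.ball x r))
    (hPfin : ∀ (x : X) (r : ℝ), 0 < r →
      0 < μ (Metric.ball x r) ∧ μ (Metric.ball x r) < ⊤)
    (x : X) (R : ℝ) : IsCompact (Metric.closedBall x R) := by
  rw [isCompact_iff_totallyBounded_isComplete]
  constructor
  · exact (totallyBounded_ball_of_doubling hC hPfin x (R+1)).subset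
      ((Metric.closedBall_subset_ball (by linarith)))
  · exact Metric.isClosed_closedBall.isComplete


lemma curve_of_chains [CompleteSpace X] {μ : Measure X} {Cμ : ℝ≥0}
    (hC : ∀ (x : X) (r : ℝ), 0 < r →
      μ (Metric.ball x (2*r)) ≤ (Cμ:ℝ≥0∞) * μ (Metric.ball x r))
    (hPfin : ∀ (x : X) (r : ℝ), 0 < r →
      0 < μ (Metric.ball x r) ∧ μ (Metric.ball x r) < ⊤)
    {x₀ x₁ : X} {Λ : ℝ} (hΛ : 0 < Λ)
    (hchain : ∀ ε : ℝ, 0 < ε → ∃ (m : ℕ) (z : ℕ → X), z 0 = x₀ ∧ z m = x₁ ∧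
      (∀ i < m, dist (z i) (z (i+1)) < ε) ∧
      (∑ i ∈ Finset.range m, dist (z i) (z (i+1))) ≤ Λ) :
    ∃ γ : ℝ → X, γ 0 = x₀ ∧ γ 1 = x₁ ∧
      ∀ s ∈ Set.Icc (0:ℝ) 1, ∀ t ∈ Set.Icc (0:ℝ) 1, s ≤ t →
        dist (γ s) (γ t) ≤ Λ * (t - s) := by
  have hchain' : ∀ n : ℕ, ∃ (m : ℕ) (z : ℕ → X), z 0 = x₀ ∧ z m = x₁ ∧
      (∀ i < m, dist (z i) (z (i+1)) < 1/(n+1)) ∧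
      (∑ i ∈ Finset.range m, dist (z i) (z (i+1))) ≤ Λ := fun n =>
    hchain (1/(n+1)) (by positivity)
  choose m z h0 h1 hstep hsum using hchain'
  set sf : ℕ → ℕ → ℝ := fun n j => ∑ i ∈ Finset.range j, dist (z n i) (z n (i+1)) with hsf
  have hsf0 : ∀ n, sf n 0 = 0 := fun n => by simp [hsf]
  have hsfnn : ∀ n j, 0 ≤ sf n j := fun n j => Finset.sum_nonneg fun i _ => dist_nonneg
  have hsfmono : ∀ n, Monotone (sf n) := by
    intro n j k hjk
    exact Finset.sum_le_sum_of_subset_of_nonneg (Finset.range_subset_range.2 hjk)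
      (fun i _ _ => dist_nonneg)
  have hsucc : ∀ n j, sf n (j+1) = sf n j + dist (z n j) (z n (j+1)) := fun n j =>
    Finset.sum_range_succ _ _
  have htri : ∀ n j i, j ≤ i → dist (z n j) (z n i) ≤ sf n i - sf n j := by
    intro n j i hji
    induction i, hji using Nat.le_induction with
    | base => simp
    | succ i hji ih =>
      calc dist (z n j) (z n (i+1)) ≤ dist (z n j) (z n i) + dist (z n i) (z n (i+1)) :=
            dist_triangle _ _ _
      _ ≤ sf n i - sf n j + dist (z n i) (z n (i+1)) := by linarith
      _ = sf n (i+1) - sf n j := by rw [hsucc n i]; ring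
  set T : ℕ → ℝ := fun n => sf n (m n) with hT
  have hT0 : ∀ n, 0 ≤ T n := fun n => hsfnn n _
  have hTΛ : ∀ n, T n ≤ Λ := fun n => hsum n
  set Sset : ℕ → ℝ → Set ℕ := fun n t => {i | i ≤ m n ∧ sf n i ≤ t * T n} with hSset
  have hSne : ∀ n, ∀ t : ℝ, 0 ≤ t → 0 ∈ Sset n t := by
    intro n t ht
    refine ⟨Nat.zero_le _, ?_⟩
    rw [hsf0]
    exact mul_nonneg ht (hT0 n)
  have hSbdd : ∀ n t, BddAbove (Sset n t) := fun n t => ⟨m n, fun i hi => hi.1⟩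
  set idx : ℕ → ℝ → ℕ := fun n t => sSup (Sset n t) with hidx
  have hidx_mem : ∀ n, ∀ t : ℝ, 0 ≤ t → idx n t ∈ Sset n t := fun n t ht =>
    Nat.sSup_mem ⟨0, hSne n t ht⟩ (hSbdd n t)
  have hidx_le : ∀ n t, idx n t ≤ m n := by
    intro n t
    rcases Set.eq_empty_or_nonempty (Sset n t) with h | h
    · have : idx n t = sSup (∅ : Set ℕ) := by rw [hidx]; simp [h]
      rw [this, csSup_empty]
      exact Nat.zero_le _
    · exact (Nat.sSup_mem h (hSbdd n t)).1
  set γn : ℕ → ℝ → X := fun n t => z n (idx n t) with hγn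
  have hmemball : ∀ n t, γn n t ∈ Metric.closedBall x₀ Λ := by
    intro n t
    rw [Metric.mem_closedBall]
    have h2 := htri n 0 (idx n t) (Nat.zero_le _)
    rw [h0 n, hsf0 n] at h2
    have h3 : sf n (idx n t) ≤ T n := hsfmono n (hidx_le n t)
    calc dist (γn n t) x₀ = dist x₀ (z n (idx n t)) := dist_comm _ _
    _ ≤ sf n (idx n t) - 0 := h2
    _ ≤ Λ := by linarith [hTΛ n]
  have hγn0 : ∀ n, γn n 0 = x₀ := by
    intro n
    have hmem := hidx_mem n 0 le_rfl
    have h2 : sf n (idx n 0) = 0 :=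
      le_antisymm (by simpa using hmem.2) (hsfnn n _)
    have h3 := htri n 0 (idx n 0) (Nat.zero_le _)
    rw [hsf0 n, h2] at h3
    have h4 : dist (z n 0) (z n (idx n 0)) = 0 := le_antisymm (by linarith) dist_nonneg
    rw [hγn]
    rw [← h0 n]
    exact (dist_eq_zero.1 h4).symm
  have hγn1 : ∀ n, γn n 1 = x₁ := by
    intro n
    have hmn : m n ∈ Sset n 1 := ⟨le_rfl, by rw [one_mul]⟩
    have h2 : idx n 1 = m n :=
      le_antisymm (hidx_le n 1) (le_csSup (hSbdd n 1) hmn)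
    rw [hγn]; simp only [h2]; exact h1 n
  have hbound : ∀ n : ℕ, ∀ s ∈ Set.Icc (0:ℝ) 1, ∀ t ∈ Set.Icc (0:ℝ) 1, s ≤ t →
      dist (γn n s) (γn n t) ≤ Λ * (t - s) + 1/(n+1) := by
    intro n s hs t ht hst
    have hmem_s := hidx_mem n s hs.1
    have hmem_t := hidx_mem n t (hs.1.trans hst)
    have hmono : idx n s ≤ idx n t := by
      apply csSup_le_csSup (hSbdd n t) ⟨0, hSne n s hs.1⟩
      intro i hi
      exact ⟨hi.1, hi.2.trans (mul_le_mul_of_nonneg_right hst (hT0 n))⟩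
    have hlow : s * T n - 1/(n+1) ≤ sf n (idx n s) := by
      rcases eq_or_lt_of_le (hidx_le n s) with heq | hlt
      · -- idx n s = m n
        have : sf n (idx n s) = T n := by rw [heq]
      -- T n ≥ s * T n since s ≤ 1
        rw [this]
        have h5 : s * T n ≤ T n := by
          nlinarith [hT0 n, hs.1, hs.2]
        have : (0:ℝ) < 1/(n+1) := by positivity
        linarith
      · -- idx n s < m n, so idx n s + 1 not in Sset
        have hnotin : idx n s + 1 ∉ Sset n s := by
          intro hin
          have h5 : idx n s + 1 ≤ idx n s := le_csSup (hSbdd n s) hin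
          omega
        have h6 : ¬ (sf n (idx n s + 1) ≤ s * T n) := by
          intro hle
          exact hnotin ⟨hlt, hle⟩
        push_neg at h6
        have h7 := hsucc n (idx n s)
        have h8 : dist (z n (idx n s)) (z n (idx n s + 1)) < 1/(n+1) :=
          hstep n _ hlt
        linarith
    have hup : sf n (idx n t) ≤ t * T n := hmem_t.2
    calc dist (γn n s) (γn n t) ≤ sf n (idx n t) - sf n (idx n s) := htri n _ _ hmono
    _ ≤ t * T n - (s * T n - 1/(n+1)) := by linarith
    _ = (t - s) * T n + 1/(n+1) := by ring
    _ ≤ Λ * (t - s) + 1/(n+1) := by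
        have h9 : (t - s) * T n ≤ (t - s) * Λ := by
          apply mul_le_mul_of_nonneg_left (hTΛ n) (by linarith)
        linarith
  -- pass to an ultrafilter limit
  have hK : IsCompact (Metric.closedBall x₀ Λ) :=
    isCompact_closedBall_of_doubling hC hPfin x₀ Λ
  set U : Ultrafilter ℕ := Ultrafilter.of Filter.atTop with hUdef
  have hU : (U : Filter ℕ) ≤ Filter.atTop := Ultrafilter.of_le _
  have hlim : ∀ t : ℝ, ∃ x ∈ Metric.closedBall x₀ Λ,
      Filter.Tendsto (fun n => γn n t) (U : Filter ℕ) (nhds x) := by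
    intro t
    obtain ⟨x, hx, hle⟩ := hK.ultrafilter_le_nhds (U.map (fun n => γn n t))
      (by
        rw [Ultrafilter.coe_map, Filter.le_principal_iff, Filter.mem_map]
        exact Filter.univ_mem' fun n => hmemball n t)
    refine ⟨x, hx, ?_⟩
    rwa [Ultrafilter.coe_map] at hle
  choose γ hγK hγ using hlim
  refine ⟨γ, ?_, ?_, ?_⟩
  · have hconst : Filter.Tendsto (fun n => γn n 0) (U : Filter ℕ) (nhds x₀) := by
      have he : (fun n => γn n 0) = fun _ => x₀ := funext hγn0
      rw [he]; exact tendsto_const_nhds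
    exact tendsto_nhds_unique (hγ 0) hconst
  · have hconst : Filter.Tendsto (fun n => γn n 1) (U : Filter ℕ) (nhds x₁) := by
      have he : (fun n => γn n 1) = fun _ => x₁ := funext hγn1
      rw [he]; exact tendsto_const_nhds
    exact tendsto_nhds_unique (hγ 1) hconst
  · intro s hs t ht hst
    have htend : Filter.Tendsto (fun n => dist (γn n s) (γn n t)) (U : Filter ℕ)
        (nhds (dist (γ s) (γ t))) := (hγ s).dist (hγ t)
    refine le_of_forall_pos_le_add fun δ hδ => ?_
    have hev : ∀ᶠ n in (U : Filter ℕ), dist (γn n s) (γn n t) ≤ Λ * (t - s) + δ := by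
      refine Filter.Eventually.filter_mono hU ?_
      filter_upwards [Filter.eventually_ge_atTop ⌈1/δ⌉₊] with n hn
      have h1 : (1:ℝ)/δ ≤ n := (Nat.le_ceil _).trans (by exact_mod_cast hn)
      have h2 : (1:ℝ)/(n+1) ≤ δ := by
        rw [div_le_iff₀ (by positivity : (0:ℝ) < (n:ℝ)+1)]
        rw [div_le_iff₀ hδ] at h1
        nlinarith
      linarith [hbound n s hs t ht hst]
    exact le_of_tendsto htend hev

end MeasurePart

end QCaux


/-- Theorem A.1, Semmes: a complete doubling metric measure space with a
`p`-Poincaré inequality is `λ`-quasiconvex, `λ` depending only on the constants. -/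
theorem poincare_implies_quasiconvex
    (Cμ : ℝ≥0) (L p : ℝ) (hL : 1 ≤ L) (hp : 1 ≤ p) :
    ∃ lam : ℝ, 0 < lam ∧
      ∀ (X : Type) [MetricSpace X] [CompleteSpace X] [MeasurableSpace X] [BorelSpace X]
        (μ : Measure X),
        DoublingWith μ Cμ → PoincareIneq μ p L →
        ∀ x x' : X, ∃ γ : ℝ → X,
          ContinuousOn γ (Set.Icc 0 1) ∧ γ 0 = x ∧ γ 1 = x' ∧
          eVariationOn γ (Set.Icc 0 1) ≤ ENNReal.ofReal (lam * dist x x') := by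
  classical
  refine ⟨(6 * (Cμ:ℝ) + 2 * (Cμ:ℝ)^2) * L + 1, ?_, ?_⟩
  · have h0 : (0:ℝ) ≤ (6 * (Cμ:ℝ) + 2 * (Cμ:ℝ)^2) * L :=
      mul_nonneg (by positivity) (by linarith)
    linarith
  intro X _ _ _ _ μ hD hP x x'
  rcases eq_or_lt_of_le (dist_nonneg (x := x) (y := x')) with hd0 | hd0
  · -- the two points coincide
    have hxx : x = x' := by rw [← dist_eq_zero]; exact hd0.symm
    refine ⟨fun _ => x, continuousOn_const, rfl, hxx.symm ▸ rfl, ?_⟩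
    have hsub : ((fun _ : ℝ => x) '' Set.Icc 0 1).Subsingleton := by
      rintro a ⟨_, _, rfl⟩ b ⟨_, _, rfl⟩; rfl
    rw [eVariationOn.constant_on hsub]
    exact zero_le
  · have hC : ∀ (y : X) (r : ℝ), 0 < r →
        μ (Metric.ball y (2*r)) ≤ (Cμ:ℝ≥0∞) * μ (Metric.ball y r) := hD
    have hPfin : ∀ (y : X) (r : ℝ), 0 < r →
        0 < μ (Metric.ball y r) ∧ μ (Metric.ball y r) < ⊤ := hP.1
    set d₀ := dist x x' with hd₀def
    set lam0 := (6 * (Cμ:ℝ) + 2 * (Cμ:ℝ)^2) * L with hlam0def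
    have hlam0nn : 0 ≤ lam0 := by
      rw [hlam0def]; exact mul_nonneg (by positivity) (by linarith)
    set Λ := (lam0 + 1) * d₀ with hΛdef
    have hΛpos : 0 < Λ := by rw [hΛdef]; nlinarith
    have hchain : ∀ ε : ℝ, 0 < ε → ∃ (mm : ℕ) (zz : ℕ → X), zz 0 = x ∧ zz mm = x' ∧
        (∀ i < mm, dist (zz i) (zz (i+1)) < ε) ∧
        (∑ i ∈ Finset.range mm, dist (zz i) (zz (i+1))) ≤ Λ := by
      intro ε hε
      have hM0 : 0 ≤ Λ := hΛpos.le
      have hflip := QCaux.chainFn_lipschitzWith (X := X) hε hM0 x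
      have hIsLip : IsLip (QCaux.chainFn ε Λ x) := ⟨_, hflip⟩
      have hlip0 : ∀ z, 0 ≤ lipLow (QCaux.chainFn ε Λ x) z :=
        fun z => QCaux.lipLow_nonneg_of_lip hflip z
      have hlip1 : ∀ z, lipLow (QCaux.chainFn ε Λ x) z ≤ 1 :=
        fun z => QCaux.chainFn_lipLow_le_one hε hM0 x z
      have hpoin := hP.2 (QCaux.chainFn ε Λ x) hIsLip
      have hest := QCaux.main_est hL hp hC hPfin hflip hlip0 hlip1
        (fun y r hr => hpoin y r hr) (x₀ := x) (x₁ := x') hd0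
      have hfx : QCaux.chainFn ε Λ x x = 0 := QCaux.chainFn_self ε Λ hM0 x
      have hfle : QCaux.chainFn ε Λ x x' ≤ lam0 * d₀ := by
        have h1 := (abs_le.1 hest).2
        rw [hfx] at h1
        have h2 : (6 * (Cμ:ℝ) + 2 * (Cμ:ℝ)^2) * L * dist x x' = lam0 * d₀ := by
          rw [hlam0def, hd₀def]
        linarith
      obtain ⟨ℓ, hℓmem, hℓlt⟩ := QCaux.chainFn_extract hM0 hd0 hfle
        (le_of_eq (by rw [hΛdef]; ring))
      obtain ⟨mm, zz, hz0, hzm, hsteps, hsumeq⟩ := hℓmem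
      refine ⟨mm, zz, hz0, hzm, hsteps, ?_⟩
      rw [hsumeq, hΛdef]
      nlinarith
    obtain ⟨γ, hγ0, hγ1, hγlip⟩ := QCaux.curve_of_chains hC hPfin hΛpos hchain
    have hlipOn : LipschitzOnWith (Real.toNNReal Λ) γ (Set.Icc 0 1) := by
      apply LipschitzOnWith.of_dist_le_mul
      intro a ha b hb
      rw [Real.coe_toNNReal _ hΛpos.le, Real.dist_eq]
      rcases le_total a b with hab | hab
      · rw [abs_sub_comm, abs_of_nonneg (by linarith : (0:ℝ) ≤ b - a)]
        exact hγlip a ha b hb hab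
      · rw [abs_of_nonneg (by linarith : (0:ℝ) ≤ a - b), dist_comm]
        exact hγlip b hb a ha hab
    refine ⟨γ, hlipOn.continuousOn, hγ0, hγ1, ?_⟩
    have hmaps : Set.MapsTo (id : ℝ → ℝ) (Set.Icc 0 1) (Set.Icc 0 1) := fun a ha => ha
    have h2 := hlipOn.comp_eVariationOn_le hmaps
    have h3 : eVariationOn (id : ℝ → ℝ) (Set.Icc (0:ℝ) 1) ≤ ENNReal.ofReal 1 := by
      have h4 := (monotone_id.monotoneOn (Set.Icc (0:ℝ) 1)).eVariationOn_le
        (Set.left_mem_Icc.2 zero_le_one) (Set.right_mem_Icc.2 zero_le_one)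
      rw [Set.inter_self] at h4
      simpa using h4
    have h5 : eVariationOn γ (Set.Icc 0 1) ≤ (Real.toNNReal Λ : ℝ≥0∞) * ENNReal.ofReal 1 := by
      calc eVariationOn γ (Set.Icc 0 1) = eVariationOn (γ ∘ id) (Set.Icc 0 1) := rfl
      _ ≤ (Real.toNNReal Λ : ℝ≥0∞) * eVariationOn (id : ℝ → ℝ) (Set.Icc 0 1) := h2
      _ ≤ _ := mul_le_mul_right h3 _
    calc eVariationOn γ (Set.Icc 0 1)
        ≤ (Real.toNNReal Λ : ℝ≥0∞) * ENNReal.ofReal 1 := h5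
    _ = ENNReal.ofReal Λ := by rw [ENNReal.ofReal_one, mul_one]; rfl
    _ ≤ ENNReal.ofReal ((lam0 + 1) * d₀) := by rw [hΛdef]
end
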